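/- arXiv:2508.11441 — 3 statements merged into one kernel-verified Lean document; each statement's English description precedes it below -/
import Mathlib

section
/- Let X ⊆ ℝ^d be compact, let P be a probability distribution on X with a positive density with respect to Lebesgue measure, and let M > 0. Let F = L^M be the class of affine linear functions f(x) = wᵀx + b with ‖w‖ < M and |b| < M. Then for every f ∈ F, every x_0 in the interior of X, and every n ≥ 1, the gradient explanation E_grad(f, x_0) = ∇f(x_0) is non-trivial (F_explain ⊊ F_predict) and informative (R_n(F_explain) < R_n(F_predict)). -/
open MeasureTheory
open scoped ENNReal RealInnerProductSpace

/-- The distribution of one sample: a point drawn from `μ` together with an independent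
Rademacher sign (uniform on `{-1, +1}`), taken as an `n`-fold product. -/
noncomputable def sampleMeasure {α : Type*} [MeasurableSpace α] (μ : Measure α) (n : ℕ) :
    Measure (Fin n → α × ℝ) :=
  Measure.pi fun _ =>
    μ.prod ((2 : ℝ≥0∞)⁻¹ • Measure.dirac (-1 : ℝ) + (2 : ℝ≥0∞)⁻¹ • Measure.dirac (1 : ℝ))

/-- Rademacher complexity `R_n(F) = E_{x,σ} sup_{g ∈ F} (1/n) ∑ σ_i g(x_i)`. -/
noncomputable def rademacher {α : Type*} [MeasurableSpace α] (μ : Measure α) (n : ℕ)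
    (F : Set (α → ℝ)) : ℝ :=
  ∫ ω, sSup ((fun g => (n : ℝ)⁻¹ * ∑ i, (ω i).2 * g (ω i).1) '' F) ∂(sampleMeasure μ n)

section Aux

open InnerProductSpace

lemma gradient_affine {d : ℕ} (w : EuclideanSpace ℝ (Fin d)) (b : ℝ)
    (x : EuclideanSpace ℝ (Fin d)) : gradient (fun y => ⟪w, y⟫ + b) x = w := by
  have h : HasGradientAt (fun y : EuclideanSpace ℝ (Fin d) => ⟪w, y⟫ + b) w x := by
    rw [hasGradientAt_iff_hasFDerivAt]
    have : (toDual ℝ (EuclideanSpace ℝ (Fin d)) w : EuclideanSpace ℝ (Fin d) →L[ℝ] ℝ)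
        = innerSL ℝ w := by ext y; simp [toDual_apply_apply]
    rw [this]
    exact ((innerSL ℝ w).hasFDerivAt).add_const b
  exact h.gradient

lemma val_meas {d n : ℕ} (p : EuclideanSpace ℝ (Fin d) × ℝ) :
    Measurable (fun ω : Fin n → EuclideanSpace ℝ (Fin d) × ℝ =>
      (n : ℝ)⁻¹ * ∑ i, (ω i).2 * (⟪p.1, (ω i).1⟫ + p.2)) := by
  refine Measurable.const_mul (Finset.measurable_sum _ fun i _ => ?_) _
  exact (measurable_snd.comp (measurable_pi_apply i)).mul
    ((Measurable.inner measurable_const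
      (measurable_fst.comp (measurable_pi_apply i))).add_const _)

lemma val_cont {d n : ℕ} (ω : Fin n → EuclideanSpace ℝ (Fin d) × ℝ) :
    Continuous (fun p : EuclideanSpace ℝ (Fin d) × ℝ =>
      (n : ℝ)⁻¹ * ∑ i, (ω i).2 * (⟪p.1, (ω i).1⟫ + p.2)) := by
  refine continuous_const.mul (continuous_finset_sum _ fun i _ => ?_)
  exact continuous_const.mul ((Continuous.inner continuous_fst continuous_const).add
    continuous_snd)

end Aux

set_option maxHeartbeats 2000000 in
/-- **Gradient explanations on linear functions are informative.** -/
theorem gradient_informative_on_linear_functions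
    {d : ℕ} (hd : 0 < d)
    (X : Set (EuclideanSpace ℝ (Fin d))) (hXcompact : IsCompact X)
    (μ : Measure (EuclideanSpace ℝ (Fin d))) [IsProbabilityMeasure μ]
    (ρ : EuclideanSpace ℝ (Fin d) → ℝ≥0∞)
    (hdens : μ = volume.withDensity ρ) (hpos : ∀ x ∈ X, 0 < ρ x) (hsupp : μ X = 1)
    (M : ℝ) (hM : 0 < M)
    (F : Set (EuclideanSpace ℝ (Fin d) → ℝ))
    (hF : F = {g | ∃ (w : EuclideanSpace ℝ (Fin d)) (b : ℝ),
        ‖w‖ < M ∧ |b| < M ∧ ∀ x ∈ X, g x = ⟪w, x⟫ + b})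
    (f : EuclideanSpace ℝ (Fin d) → ℝ) (hf : f ∈ F)
    (x₀ : EuclideanSpace ℝ (Fin d)) (hx₀ : x₀ ∈ interior X)
    (n : ℕ) (hn : 1 ≤ n) :
    {g ∈ F | g x₀ = f x₀ ∧ gradient g x₀ = gradient f x₀} ⊂ {g ∈ F | g x₀ = f x₀} ∧
    rademacher μ n {g ∈ F | g x₀ = f x₀ ∧ gradient g x₀ = gradient f x₀} <
      rademacher μ n {g ∈ F | g x₀ = f x₀} := by
  classical
  have hx₀X : x₀ ∈ X := interior_subset hx₀
  have hf' := hf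
  rw [hF] at hf'
  obtain ⟨wf, bf, hwf, hbf, hfX⟩ := hf'
  -- the gradient of any member of F at x₀ is its weight vector
  have hgrad : ∀ (g : EuclideanSpace ℝ (Fin d) → ℝ) (w : EuclideanSpace ℝ (Fin d)) (b : ℝ),
      (∀ x ∈ X, g x = ⟪w, x⟫ + b) → gradient g x₀ = w := by
    intro g w b hg
    have hev : g =ᶠ[nhds x₀] fun y => ⟪w, y⟫ + b := by
      filter_upwards [isOpen_interior.mem_nhds hx₀] with y hy
      exact hg y (interior_subset hy)
    rw [hev.gradient_eq, gradient_affine]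
  have hfgrad : gradient f x₀ = wf := hgrad f wf bf hfX
  have hfx₀ : f x₀ = ⟪wf, x₀⟫ + bf := hfX x₀ hx₀X
  -- a direction
  set v : EuclideanSpace ℝ (Fin d) := EuclideanSpace.single ⟨0, hd⟩ (1:ℝ) with hv
  have hvnorm : ‖v‖ = 1 := by rw [hv, EuclideanSpace.norm_single]; norm_num
  have hvne : v ≠ 0 := by
    intro h; rw [h, norm_zero] at hvnorm; norm_num at hvnorm
  -- the hyperplane through x₀ orthogonal to v is null
  have hHmeas : MeasurableSet {x : EuclideanSpace ℝ (Fin d) | ⟪v, x - x₀⟫ = 0} := by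
    have hc : Continuous fun x : EuclideanSpace ℝ (Fin d) => ⟪v, x - x₀⟫ :=
      Continuous.inner continuous_const (continuous_id.sub continuous_const)
    exact hc.measurable (measurableSet_singleton 0)
  have hH : μ {x : EuclideanSpace ℝ (Fin d) | ⟪v, x - x₀⟫ = 0} = 0 := by
    have hvol : volume {x : EuclideanSpace ℝ (Fin d) | ⟪v, x - x₀⟫ = 0} = 0 := by
      have hK : LinearMap.ker (innerSL ℝ v).toLinearMap ≠ ⊤ := by
        intro htop
        have hvK : v ∈ LinearMap.ker (innerSL ℝ v).toLinearMap := by rw [htop]; trivial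
        rw [LinearMap.mem_ker] at hvK
        simp only [ContinuousLinearMap.coe_coe, innerSL_apply_apply] at hvK
        exact hvne (inner_self_eq_zero.mp hvK)
      have hs_ne : AffineSubspace.mk' x₀ (LinearMap.ker (innerSL ℝ v).toLinearMap) ≠ ⊤ := by
        intro htop
        apply hK
        have := AffineSubspace.direction_mk' x₀ (LinearMap.ker (innerSL ℝ v).toLinearMap)
        rw [htop, AffineSubspace.direction_top] at this
        exact this.symm
      have hset : {x : EuclideanSpace ℝ (Fin d) | ⟪v, x - x₀⟫ = 0}
          = (AffineSubspace.mk' x₀ (LinearMap.ker (innerSL ℝ v).toLinearMap) : Set _) := by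
        ext x
        rw [Set.mem_setOf_eq, SetLike.mem_coe, AffineSubspace.mem_mk',
          LinearMap.mem_ker]
        simp [vsub_eq_sub]
      rw [hset]
      exact Measure.addHaar_affineSubspace volume _ hs_ne
    rw [hdens, withDensity_apply _ hHmeas, Measure.restrict_eq_zero.mpr hvol,
      lintegral_zero_measure]
  -- choose a halfspace of positive measure
  obtain ⟨c, hcabs, hG⟩ : ∃ c : ℝ, |c| = 1 ∧ 0 < μ {x | 0 < c * ⟪v, x - x₀⟫} := by
    by_cases hposμ : 0 < μ {x : EuclideanSpace ℝ (Fin d) | 0 < ⟪v, x - x₀⟫}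
    · exact ⟨1, abs_one, by simpa using hposμ⟩
    · refine ⟨-1, by norm_num, ?_⟩
      have h1 : μ {x : EuclideanSpace ℝ (Fin d) | 0 < ⟪v, x - x₀⟫} = 0 := by
        simpa using (not_lt.mp hposμ)
      by_contra hzero
      have h0 : μ {x : EuclideanSpace ℝ (Fin d) | 0 < (-1:ℝ) * ⟪v, x - x₀⟫} = 0 := by
        simpa using (not_lt.mp hzero)
      have huniv : (Set.univ : Set (EuclideanSpace ℝ (Fin d))) ⊆
          {x | 0 < ⟪v, x - x₀⟫} ∪ {x | 0 < (-1:ℝ) * ⟪v, x - x₀⟫} ∪ {x | ⟪v, x - x₀⟫ = 0} := by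
        intro x _
        rcases lt_trichotomy (⟪v, x - x₀⟫) 0 with h | h | h
        · left; right; simpa using h
        · right; exact h
        · left; left; exact h
      have := measure_mono (μ := μ) huniv
      have hle := this.trans ((measure_union_le _ _).trans
        (add_le_add (measure_union_le _ _) le_rfl))
      rw [measure_univ, h0, h1, hH] at hle
      simp at hle
  have hcne : c ≠ 0 := by intro h; rw [h] at hcabs; norm_num at hcabs
  -- perturbation size
  set ε : ℝ := min ((M - ‖wf‖)/2) ((M - |bf|)/(2*(|⟪v, x₀⟫| + 1))) with hε
  have hεpos : 0 < ε := by
    apply lt_min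
    · linarith
    · apply div_pos (by linarith) (by positivity)
  set w' : EuclideanSpace ℝ (Fin d) := wf + (c*ε) • v with hw'def
  set b' : ℝ := bf - (c*ε) * ⟪v, x₀⟫ with hb'def
  have hw' : ‖w'‖ < M := by
    have h1 : ‖w'‖ ≤ ‖wf‖ + ‖(c*ε) • v‖ := norm_add_le _ _
    have h2 : ‖(c*ε) • v‖ = ε := by
      rw [norm_smul, hvnorm, mul_one, Real.norm_eq_abs, abs_mul, hcabs, one_mul,
        abs_of_pos hεpos]
    have h3 : ε ≤ (M - ‖wf‖)/2 := min_le_left _ _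
    linarith
  have hb' : |b'| < M := by
    have h1 : |b'| ≤ |bf| + ε * |⟪v, x₀⟫| := by
      calc |b'| ≤ |bf| + |(c*ε) * ⟪v, x₀⟫| := abs_sub _ _
        _ = |bf| + ε * |⟪v, x₀⟫| := by
            rw [abs_mul, abs_mul, hcabs, one_mul, abs_of_pos hεpos]
    have h2 : ε ≤ (M - |bf|)/(2*(|⟪v, x₀⟫| + 1)) := min_le_right _ _
    have ht : (0:ℝ) ≤ |⟪v, x₀⟫| := abs_nonneg _
    have h3 : ε * (2*(|⟪v, x₀⟫| + 1)) ≤ M - |bf| := by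
      rw [← le_div_iff₀ (by positivity)]
      exact h2
    nlinarith
  set g : EuclideanSpace ℝ (Fin d) → ℝ := fun x => ⟪w', x⟫ + b' with hgdef
  have hinner_w' : ∀ x : EuclideanSpace ℝ (Fin d), ⟪w', x⟫ = ⟪wf, x⟫ + (c*ε) * ⟪v, x⟫ := by
    intro x
    rw [hw'def, inner_add_left, real_inner_smul_left]
  have hgdiff : ∀ x : EuclideanSpace ℝ (Fin d),
      g x - (⟪wf, x⟫ + bf) = (c*ε) * ⟪v, x - x₀⟫ := by
    intro x
    rw [hgdef]
    simp only []
    rw [hinner_w', hb'def, inner_sub_right]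
    ring
  have hgx₀ : g x₀ = f x₀ := by
    have := hgdiff x₀
    rw [sub_self, inner_zero_right, mul_zero] at this
    rw [hfx₀]
    linarith
  have hgF : g ∈ F := by
    rw [hF]; exact ⟨w', b', hw', hb', fun x _ => rfl⟩
  have hggrad : gradient g x₀ = w' := hgrad g w' b' (fun x _ => rfl)
  have hw'ne : w' ≠ wf := by
    intro h
    rw [hw'def] at h
    have : (c*ε) • v = 0 := by
      have := congrArg (fun z => z - wf) h
      simpa [add_sub_cancel_left] using this
    rcases smul_eq_zero.mp this with h1 | h1
    · exact (mul_ne_zero hcne (ne_of_gt hεpos)) h1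
    · exact hvne h1
  -- Part 1: strict inclusion
  have hsub : {g' ∈ F | g' x₀ = f x₀ ∧ gradient g' x₀ = gradient f x₀}
      ⊂ {g' ∈ F | g' x₀ = f x₀} := by
    rw [Set.ssubset_iff_subset_ne]
    constructor
    · intro g' hg'; exact ⟨hg'.1, hg'.2.1⟩
    · intro heq
      have hgmem : g ∈ {g' ∈ F | g' x₀ = f x₀} := ⟨hgF, hgx₀⟩
      rw [← heq] at hgmem
      have := hgmem.2.2
      rw [hggrad, hfgrad] at this
      exact hw'ne this
  refine ⟨hsub, ?_⟩

  -- ===== Part 2 =====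
  set σm : Measure ℝ :=
    (2 : ℝ≥0∞)⁻¹ • Measure.dirac (-1 : ℝ) + (2 : ℝ≥0∞)⁻¹ • Measure.dirac (1 : ℝ) with hσm
  haveI hσprob : IsProbabilityMeasure σm := by
    constructor
    rw [hσm]
    simp [Measure.add_apply, Measure.smul_apply, smul_eq_mul, ENNReal.inv_two_add_inv_two]
  have hνdef : sampleMeasure μ n = Measure.pi fun _ : Fin n => μ.prod σm := rfl
  haveI hνprob : IsProbabilityMeasure (sampleMeasure μ n) := by
    rw [hνdef]; infer_instance
  have hXm : MeasurableSet X := hXcompact.isClosed.measurableSet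
  have hm11 : MeasurableSet ({-1,1} : Set ℝ) :=
    (Set.toFinite _).measurableSet
  have hm1 : MeasurableSet ({1} : Set ℝ) := measurableSet_singleton _
  have hσ11 : σm ({-1,1} : Set ℝ) = 1 := by
    rw [hσm]
    simp only [Measure.add_apply, Measure.smul_apply, smul_eq_mul,
      Measure.dirac_apply' _ hm11]
    rw [Set.indicator_of_mem (by norm_num) (1 : ℝ → ℝ≥0∞),
      Set.indicator_of_mem (by norm_num) (1 : ℝ → ℝ≥0∞)]
    simp [ENNReal.inv_two_add_inv_two]
  have hσ1 : σm ({1} : Set ℝ) = 2⁻¹ := by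
    rw [hσm]
    simp only [Measure.add_apply, Measure.smul_apply, smul_eq_mul,
      Measure.dirac_apply' _ hm1]
    rw [Set.indicator_of_notMem (by norm_num) (1 : ℝ → ℝ≥0∞),
      Set.indicator_of_mem (by norm_num) (1 : ℝ → ℝ≥0∞)]
    simp
  set A : Set (Fin n → EuclideanSpace ℝ (Fin d) × ℝ) :=
    Set.univ.pi fun _ => X ×ˢ ({-1,1} : Set ℝ) with hA
  have hAm : MeasurableSet A := MeasurableSet.univ_pi fun _ => hXm.prod hm11
  have hA1 : sampleMeasure μ n A = 1 := by
    rw [hνdef, hA, Measure.pi_pi]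
    simp [Measure.prod_prod, hsupp, hσ11]
  have hAae : ∀ᵐ ω ∂(sampleMeasure μ n), ω ∈ A := by
    have hcompl : sampleMeasure μ n Aᶜ = 0 := by
      rw [measure_compl hAm (measure_ne_top _ _), measure_univ, hA1, tsub_self]
    rw [Filter.eventually_iff, mem_ae_iff]
    simpa using hcompl
  -- bound on X
  obtain ⟨R, hR⟩ := hXcompact.isBounded.exists_norm_le
  have hR0 : (0:ℝ) ≤ R := le_trans (norm_nonneg x₀) (hR x₀ hx₀X)
  set C0 : ℝ := M * R + M with hC0
  set val : (Fin n → EuclideanSpace ℝ (Fin d) × ℝ) → EuclideanSpace ℝ (Fin d) × ℝ → ℝ :=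
    fun ω p => (n : ℝ)⁻¹ * ∑ i, (ω i).2 * (⟪p.1, (ω i).1⟫ + p.2) with hvaldef
  set P : Set (EuclideanSpace ℝ (Fin d) × ℝ) :=
    {p | ‖p.1‖ < M ∧ |p.2| < M ∧ ⟪p.1, x₀⟫ + p.2 = f x₀} with hP
  have hPf : ((wf, bf) : EuclideanSpace ℝ (Fin d) × ℝ) ∈ P := ⟨hwf, hbf, hfx₀.symm⟩
  have hPg : ((w', b') : EuclideanSpace ℝ (Fin d) × ℝ) ∈ P := ⟨hw', hb', hgx₀⟩
  haveI : Nonempty ↥P := ⟨⟨_, hPf⟩⟩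
  obtain ⟨u, hu⟩ := TopologicalSpace.exists_dense_seq ↥P
  set Φ : (Fin n → EuclideanSpace ℝ (Fin d) × ℝ) → ℝ :=
    fun ω => ⨆ k, val ω (u k) with hΦdef
  have hn0 : ((n:ℝ)) ≠ 0 := Nat.cast_ne_zero.mpr (by omega)
  -- pointwise bound
  have hvb : ∀ ω ∈ A, ∀ p ∈ P, |val ω p| ≤ C0 := by
    intro ω hω p hp
    have hterm : ∀ i : Fin n, |(ω i).2 * (⟪p.1, (ω i).1⟫ + p.2)| ≤ C0 := by
      intro i
      have hmem := hω i (Set.mem_univ i)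
      have hx : (ω i).1 ∈ X := hmem.1
      have habs2 : |(ω i).2| = 1 := by
        rcases hmem.2 with h | h
        · rw [h]; norm_num
        · rw [Set.mem_singleton_iff] at h; rw [h]; norm_num
      rw [abs_mul, habs2, one_mul]
      calc |⟪p.1, (ω i).1⟫ + p.2| ≤ |⟪p.1, (ω i).1⟫| + |p.2| := abs_add_le _ _
        _ ≤ ‖p.1‖ * ‖(ω i).1‖ + M := add_le_add (abs_real_inner_le_norm _ _) hp.2.1.le
        _ ≤ M * R + M := by
            have h1 := hR _ hx
            nlinarith [hp.1, norm_nonneg p.1, norm_nonneg (ω i).1]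
    have h2 : |val ω p| ≤ (n:ℝ)⁻¹ * (n * C0) := by
      rw [hvaldef]
      simp only []
      rw [abs_mul, abs_of_nonneg (inv_nonneg.mpr (Nat.cast_nonneg n))]
      refine mul_le_mul_of_nonneg_left ?_ (inv_nonneg.mpr (Nat.cast_nonneg n))
      calc |∑ i, (ω i).2 * (⟪p.1, (ω i).1⟫ + p.2)|
          ≤ ∑ i, |(ω i).2 * (⟪p.1, (ω i).1⟫ + p.2)| := Finset.abs_sum_le_sum_abs _ _
        _ ≤ ∑ _i : Fin n, C0 := Finset.sum_le_sum fun i _ => hterm i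
        _ = n * C0 := by rw [Finset.sum_const, Finset.card_univ, Fintype.card_fin,
            nsmul_eq_mul]
    rwa [← mul_assoc, inv_mul_cancel₀ hn0, one_mul] at h2
  have hrange_bdd : ∀ ω ∈ A, BddAbove (Set.range fun k => val ω (u k)) := by
    intro ω hω
    exact ⟨C0, by rintro x ⟨k, rfl⟩; exact (abs_le.mp (hvb ω hω _ (u k).2)).2⟩
  have himg_bdd : ∀ ω ∈ A, BddAbove (val ω '' P) := by
    intro ω hω
    exact ⟨C0, by rintro x ⟨p, hp, rfl⟩; exact (abs_le.mp (hvb ω hω _ hp)).2⟩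
  -- the sup over P equals the countable sup
  have hΦA : ∀ ω ∈ A, sSup (val ω '' P) = Φ ω := by
    intro ω hω
    apply le_antisymm
    · refine csSup_le ⟨val ω (wf, bf), Set.mem_image_of_mem _ hPf⟩ ?_
      rintro x ⟨p, hp, rfl⟩
      have hpc : (⟨p, hp⟩ : ↥P) ∈ closure (Set.range u) := hu _
      obtain ⟨y, hy_mem, hy_tend⟩ := mem_closure_iff_seq_limit.mp hpc
      have htend : Filter.Tendsto (fun j => val ω ((y j : EuclideanSpace ℝ (Fin d) × ℝ)))
          Filter.atTop (nhds (val ω p)) := by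
        have h1 : Filter.Tendsto (fun j => ((y j : EuclideanSpace ℝ (Fin d) × ℝ)))
            Filter.atTop (nhds p) :=
          ((continuous_subtype_val.tendsto _).comp hy_tend)
        exact ((val_cont ω).tendsto p).comp h1
      refine le_of_tendsto htend (Filter.Eventually.of_forall fun j => ?_)
      obtain ⟨k, hk⟩ := hy_mem j
      calc val ω ((y j : EuclideanSpace ℝ (Fin d) × ℝ)) = val ω (u k) := by rw [← hk]
        _ ≤ Φ ω := le_ciSup (hrange_bdd ω hω) k
    · exact ciSup_le fun k => le_csSup (himg_bdd ω hω) (Set.mem_image_of_mem _ (u k).2)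
  -- image over F_predict equals image over P
  have himgP : ∀ ω ∈ A,
      ((fun g' => (n : ℝ)⁻¹ * ∑ i, (ω i).2 * g' (ω i).1) '' {g' ∈ F | g' x₀ = f x₀})
        = val ω '' P := by
    intro ω hω
    ext t
    constructor
    · rintro ⟨g', ⟨hg'F, hg'x₀⟩, rfl⟩
      rw [hF] at hg'F
      obtain ⟨w, b, hwlt, hblt, hgX⟩ := hg'F
      refine ⟨(w, b), ⟨hwlt, hblt, by rw [← hgX x₀ hx₀X, hg'x₀]⟩, ?_⟩
      rw [hvaldef]
      simp only []
      congr 1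
      refine Finset.sum_congr rfl fun i _ => ?_
      rw [hgX _ (hω i (Set.mem_univ i)).1]
    · rintro ⟨p, hp, rfl⟩
      refine ⟨fun x => ⟪p.1, x⟫ + p.2, ⟨?_, hp.2.2⟩, rfl⟩
      rw [hF]
      exact ⟨p.1, p.2, hp.1, hp.2.1, fun x _ => rfl⟩
  -- the explain class evaluates to a singleton
  have hexpl : ∀ ω ∈ A,
      sSup ((fun g' => (n : ℝ)⁻¹ * ∑ i, (ω i).2 * g' (ω i).1)
        '' {g' ∈ F | g' x₀ = f x₀ ∧ gradient g' x₀ = gradient f x₀}) = val ω (wf, bf) := by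
    intro ω hω
    have himg : ((fun g' => (n : ℝ)⁻¹ * ∑ i, (ω i).2 * g' (ω i).1)
        '' {g' ∈ F | g' x₀ = f x₀ ∧ gradient g' x₀ = gradient f x₀}) = {val ω (wf, bf)} := by
      apply Set.eq_singleton_iff_unique_mem.mpr
      constructor
      · refine ⟨f, ⟨hf, rfl, rfl⟩, ?_⟩
        rw [hvaldef]
        simp only []
        congr 1
        refine Finset.sum_congr rfl fun i _ => ?_
        rw [hfX _ (hω i (Set.mem_univ i)).1]
      · rintro t ⟨g', ⟨hg'F, hg'x₀, hg'grad⟩, rfl⟩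
        rw [hF] at hg'F
        obtain ⟨w, b, hwlt, hblt, hgX⟩ := hg'F
        have hw : w = wf := by rw [← hgrad g' w b hgX, hg'grad, hfgrad]
        have hb : b = bf := by
          have h1 := hgX x₀ hx₀X
          rw [hw] at h1
          rw [hg'x₀, hfx₀] at h1
          linarith
        rw [hvaldef]
        simp only []
        congr 1
        refine Finset.sum_congr rfl fun i _ => ?_
        rw [hgX _ (hω i (Set.mem_univ i)).1, hw, hb]
    rw [himg, csSup_singleton]
  -- measurability and integrability
  have hSf_meas : Measurable (fun ω => val ω (wf, bf)) := val_meas _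
  have hSg_meas : Measurable (fun ω => val ω (w', b')) := val_meas _
  have hΦ_meas : Measurable Φ := Measurable.iSup fun k => val_meas _
  have hint : ∀ (h : (Fin n → EuclideanSpace ℝ (Fin d) × ℝ) → ℝ), Measurable h →
      (∀ ω ∈ A, |h ω| ≤ C0) → Integrable h (sampleMeasure μ n) := by
    intro h hmeas hb
    refine Integrable.mono' (integrable_const C0) hmeas.aestronglyMeasurable ?_
    filter_upwards [hAae] with ω hω
    simpa [Real.norm_eq_abs] using hb ω hω
  have hSf_int : Integrable (fun ω => val ω (wf, bf)) (sampleMeasure μ n) :=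
    hint _ hSf_meas fun ω hω => hvb ω hω _ hPf
  have hSg_int : Integrable (fun ω => val ω (w', b')) (sampleMeasure μ n) :=
    hint _ hSg_meas fun ω hω => hvb ω hω _ hPg
  have hΦ_int : Integrable Φ (sampleMeasure μ n) := by
    refine hint _ hΦ_meas fun ω hω => abs_le.mpr ⟨?_, ?_⟩
    · exact le_trans (abs_le.mp (hvb ω hω _ (u 0).2)).1 (le_ciSup (hrange_bdd ω hω) 0)
    · exact ciSup_le fun k => (abs_le.mp (hvb ω hω _ (u k).2)).2
  -- rademacher values
  have hRpred : rademacher μ n {g' ∈ F | g' x₀ = f x₀}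
      = ∫ ω, Φ ω ∂(sampleMeasure μ n) := by
    rw [rademacher]
    refine integral_congr_ae ?_
    filter_upwards [hAae] with ω hω
    rw [himgP ω hω, hΦA ω hω]
  have hRexpl : rademacher μ n {g' ∈ F | g' x₀ = f x₀ ∧ gradient g' x₀ = gradient f x₀}
      = ∫ ω, val ω (wf, bf) ∂(sampleMeasure μ n) := by
    rw [rademacher]
    refine integral_congr_ae ?_
    filter_upwards [hAae] with ω hω
    exact hexpl ω hω
  -- positive-gap function
  set hh : (Fin n → EuclideanSpace ℝ (Fin d) × ℝ) → ℝ :=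
    fun ω => max (val ω (w', b') - val ω (wf, bf)) 0 with hhdef
  have hh_int : Integrable hh (sampleMeasure μ n) := (hSg_int.sub hSf_int).pos_part
  have hmax_eq : (fun ω => max (val ω (wf, bf)) (val ω (w', b')))
      = fun ω => val ω (wf, bf) + hh ω := by
    funext ω
    rcases le_total (val ω (wf, bf)) (val ω (w', b')) with h | h
    · rw [max_eq_right h, hhdef]
      simp only []
      rw [max_eq_left (by linarith)]
      ring
    · rw [max_eq_left h, hhdef]
      simp only []
      rw [max_eq_right (by linarith)]
      ring
  have hmax_int : Integrable (fun ω => max (val ω (wf, bf)) (val ω (w', b')))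
      (sampleMeasure μ n) := by
    rw [hmax_eq]; exact hSf_int.add hh_int
  have hle1 : ∫ ω, max (val ω (wf, bf)) (val ω (w', b')) ∂(sampleMeasure μ n)
      ≤ ∫ ω, Φ ω ∂(sampleMeasure μ n) := by
    refine integral_mono_ae hmax_int hΦ_int ?_
    filter_upwards [hAae] with ω hω
    refine max_le ?_ ?_
    · rw [← hΦA ω hω]
      exact le_csSup (himg_bdd ω hω) (Set.mem_image_of_mem _ hPf)
    · rw [← hΦA ω hω]
      exact le_csSup (himg_bdd ω hω) (Set.mem_image_of_mem _ hPg)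
  -- positivity of the gap
  haveI : Nonempty (Fin n) := ⟨⟨0, by omega⟩⟩
  have hGm : MeasurableSet {x : EuclideanSpace ℝ (Fin d) | 0 < c * ⟪v, x - x₀⟫} := by
    have hc : Continuous fun x : EuclideanSpace ℝ (Fin d) => c * ⟪v, x - x₀⟫ :=
      continuous_const.mul
        (Continuous.inner continuous_const (continuous_id.sub continuous_const))
    exact measurableSet_lt measurable_const hc.measurable
  set Ev : Set (Fin n → EuclideanSpace ℝ (Fin d) × ℝ) :=
    Set.univ.pi fun _ => {x : EuclideanSpace ℝ (Fin d) | 0 < c * ⟪v, x - x₀⟫} ×ˢ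
      ({1} : Set ℝ) with hEv
  have hEvν : sampleMeasure μ n Ev
      = (μ {x | 0 < c * ⟪v, x - x₀⟫} * 2⁻¹) ^ n := by
    rw [hνdef, hEv, Measure.pi_pi, Measure.prod_prod, hσ1, Finset.prod_const,
      Finset.card_univ, Fintype.card_fin]
  have hEvpos : 0 < sampleMeasure μ n Ev := by
    rw [hEvν]
    refine pos_iff_ne_zero.mpr (pow_ne_zero _ (mul_ne_zero (ne_of_gt hG) (by simp)))
  have hhEv : ∀ ω ∈ Ev, 0 < hh ω := by
    intro ω hω
    have hD : 0 < val ω (w', b') - val ω (wf, bf) := by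
      rw [hvaldef]
      simp only []
      rw [← mul_sub, ← Finset.sum_sub_distrib]
      refine mul_pos (by positivity) (Finset.sum_pos (fun i _ => ?_) Finset.univ_nonempty)
      have hmem := hω i (Set.mem_univ i)
      have hx : 0 < c * ⟪v, (ω i).1 - x₀⟫ := hmem.1
      have hs : (ω i).2 = 1 := hmem.2
      rw [hs, one_mul, one_mul]
      have heq : ⟪w', (ω i).1⟫ + b' - (⟪wf, (ω i).1⟫ + bf) = c * ε * ⟪v, (ω i).1 - x₀⟫ :=
        hgdiff (ω i).1
      have hpos2 : (0:ℝ) < c * ε * ⟪v, (ω i).1 - x₀⟫ := by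
        rw [show c * ε * ⟪v, (ω i).1 - x₀⟫ = ε * (c * ⟪v, (ω i).1 - x₀⟫) by ring]
        exact mul_pos hεpos hx
      linarith
    rw [hhdef]
    simp only []
    exact lt_max_of_lt_left hD
  have hhpos : 0 < ∫ ω, hh ω ∂(sampleMeasure μ n) := by
    have hnn : 0 ≤ hh := fun ω => le_max_right _ _
    rw [integral_pos_iff_support_of_nonneg hnn hh_int]
    refine lt_of_lt_of_le hEvpos (measure_mono ?_)
    intro ω hω
    exact ne_of_gt (hhEv ω hω)
  have hsplit : ∫ ω, max (val ω (wf, bf)) (val ω (w', b')) ∂(sampleMeasure μ n)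
      = (∫ ω, val ω (wf, bf) ∂(sampleMeasure μ n)) + ∫ ω, hh ω ∂(sampleMeasure μ n) := by
    rw [hmax_eq]
    exact integral_add hSf_int hh_int
  rw [hRexpl, hRpred]
  rw [hsplit] at hle1
  linarith
end

section
/- Let X ⊆ ℝ^d be compact, let P be a probability distribution on X with a positive density with respect to Lebesgue measure, and let M, ε > 0. Let F = L^M_ε be the class of noisy bounded linear functions: differentiable f: X → ℝ such that there exists an affine linear g(x) = wᵀx + b with ‖w‖ < M, |b| < M and g(x) − ε < f(x) < g(x) + ε for all x. Then for every f ∈ F, every x_0 in the interior of X, and every n ≥ 1, the gradient explanation E_grad(f, x_0) = ∇f(x_0) is non-trivial (F_explain ⊊ F_predict) but non-informative (R_n(F_explain) = R_n(F_predict)). -/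
open MeasureTheory
open scoped ENNReal RealInnerProductSpace

/-- A smooth perturbation vanishing at `x₀` and outside a ball of radius `r` around it,
with prescribed gradient `v` at `x₀` and uniform bound `‖v‖ * r`. -/
lemma exists_perturb {d : ℕ} (x₀ v : EuclideanSpace ℝ (Fin d)) {r : ℝ} (hr : 0 < r) :
    ∃ φ : EuclideanSpace ℝ (Fin d) → ℝ, Differentiable ℝ φ ∧ φ x₀ = 0 ∧
      HasGradientAt φ v x₀ ∧ (∀ x, |φ x| ≤ ‖v‖ * r) ∧ ∀ x, r ≤ dist x x₀ → φ x = 0 := by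
  let c : ContDiffBump x₀ := ⟨r/2, r, by linarith, by linarith⟩
  have hcdiff : Differentiable ℝ (c : EuclideanSpace ℝ (Fin d) → ℝ) :=
    (c.contDiff (n := 1)).differentiable (by norm_num)
  have hfd : ∀ y, HasFDerivAt (fun x : EuclideanSpace ℝ (Fin d) => ⟪v, x - x₀⟫)
      (innerSL ℝ v) y := fun y => by
    simpa [inner_sub_right] using
      ((innerSL ℝ v).hasFDerivAt (x := y)).sub_const ⟪v, x₀⟫
  have h1 : Differentiable ℝ (fun x : EuclideanSpace ℝ (Fin d) => ⟪v, x - x₀⟫) :=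
    fun y => (hfd y).differentiableAt
  refine ⟨fun x => ⟪v, x - x₀⟫ * c x, h1.mul hcdiff, by simp, ?_, ?_, ?_⟩
  · have hprod := (hfd x₀).mul (hcdiff x₀).hasFDerivAt
    rw [hasGradientAt_iff_hasFDerivAt]
    have hc1 : c x₀ = 1 := c.one_of_mem_closedBall (Metric.mem_closedBall_self c.rIn_pos.le)
    have htd : (InnerProductSpace.toDual ℝ (EuclideanSpace ℝ (Fin d)) v :
        EuclideanSpace ℝ (Fin d) →L[ℝ] ℝ) =
        ⟪v, x₀ - x₀⟫ • fderiv ℝ (c : EuclideanSpace ℝ (Fin d) → ℝ) x₀ + c x₀ • innerSL ℝ v := by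
      ext y
      simp [hc1, InnerProductSpace.toDual_apply_apply]
    rw [htd]
    exact hprod
  · intro x
    rcases le_or_gt r (dist x x₀) with h | h
    · have hz : c x = 0 := c.zero_of_le_dist h
      simp [hz, mul_nonneg (norm_nonneg v) hr.le]
    · have h2 : |⟪v, x - x₀⟫| ≤ ‖v‖ * ‖x - x₀‖ := abs_real_inner_le_norm v (x - x₀)
      have h3 : ‖x - x₀‖ ≤ r := by rw [← dist_eq_norm]; exact h.le
      have h4 : |c x| ≤ 1 := by rw [abs_of_nonneg c.nonneg]; exact c.le_one
      calc |⟪v, x - x₀⟫ * c x| = |⟪v, x - x₀⟫| * |c x| := abs_mul _ _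
        _ ≤ (‖v‖ * r) * 1 := by
            apply mul_le_mul _ h4 (abs_nonneg _) (by positivity)
            exact h2.trans (mul_le_mul_of_nonneg_left h3 (norm_nonneg v))
        _ = ‖v‖ * r := mul_one _
  · intro x hx
    simp [c.zero_of_le_dist hx]

/-- Perturb a noisy linear function, shifting its gradient at `x₀` by `v` while keeping its
value at `x₀`, its values outside the ball of radius `r₀`, and the defining tube condition. -/
lemma exists_shift {d : ℕ} {X : Set (EuclideanSpace ℝ (Fin d))} (hXcompact : IsCompact X)
    {ε : ℝ} {g : EuclideanSpace ℝ (Fin d) → ℝ}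
    (hgdiff : ∀ x ∈ X, DifferentiableAt ℝ g x)
    {w : EuclideanSpace ℝ (Fin d)} {b : ℝ}
    (htube : ∀ x ∈ X, ⟪w, x⟫ + b - ε < g x ∧ g x < ⟪w, x⟫ + b + ε)
    {x₀ : EuclideanSpace ℝ (Fin d)} (hx₀ : x₀ ∈ X)
    (v : EuclideanSpace ℝ (Fin d)) {r₀ : ℝ} (hr₀ : 0 < r₀) :
    ∃ g' : EuclideanSpace ℝ (Fin d) → ℝ,
      (∀ x ∈ X, DifferentiableAt ℝ g' x) ∧
      (∀ x ∈ X, ⟪w, x⟫ + b - ε < g' x ∧ g' x < ⟪w, x⟫ + b + ε) ∧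
      g' x₀ = g x₀ ∧ gradient g' x₀ = gradient g x₀ + v ∧
      ∀ x, r₀ ≤ dist x x₀ → g' x = g x := by
  set s : EuclideanSpace ℝ (Fin d) → ℝ :=
    fun x => min (g x - (⟪w, x⟫ + b - ε)) ((⟪w, x⟫ + b + ε) - g x) with hs
  have hgcont : ContinuousOn g X := fun x hx => (hgdiff x hx).continuousAt.continuousWithinAt
  have hlin : Continuous (fun x : EuclideanSpace ℝ (Fin d) => ⟪w, x⟫) :=
    (innerSL ℝ w).continuous
  have hscont : ContinuousOn s X := by
    have hA : ContinuousOn (fun x => g x - (⟪w, x⟫ + b - ε)) X :=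
      hgcont.sub ((hlin.continuousOn.add continuousOn_const).sub continuousOn_const)
    have hB : ContinuousOn (fun x => (⟪w, x⟫ + b + ε) - g x) X :=
      ((hlin.continuousOn.add continuousOn_const).add continuousOn_const).sub hgcont
    exact hA.inf hB
  obtain ⟨z, hzX, hminOn⟩ := hXcompact.exists_isMinOn ⟨x₀, hx₀⟩ hscont
  have hmin : ∀ x ∈ X, s z ≤ s x := fun x hx => isMinOn_iff.mp hminOn x hx
  set δ : ℝ := s z with hδdef
  have hδ : 0 < δ := lt_min (by linarith [(htube z hzX).1]) (by linarith [(htube z hzX).2])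
  set r : ℝ := min r₀ (δ / (‖v‖ + 1)) / 2 with hrdef
  have hvnn : (0:ℝ) ≤ ‖v‖ := norm_nonneg v
  have hrpos : 0 < r := by
    apply div_pos (lt_min hr₀ (by positivity)) two_pos
  have hrr₀ : r ≤ r₀ := by
    have : min r₀ (δ / (‖v‖ + 1)) ≤ r₀ := min_le_left _ _
    rw [hrdef]; linarith
  have hvr : ‖v‖ * r < δ := by
    have h1 : r ≤ δ / (‖v‖ + 1) / 2 := by
      rw [hrdef]
      have := min_le_right r₀ (δ / (‖v‖ + 1))
      linarith
    have h2 : ‖v‖ * (δ / (‖v‖ + 1)) ≤ δ := by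
      rw [mul_comm, div_mul_eq_mul_div, div_le_iff₀ (by positivity)]
      nlinarith
    nlinarith
  obtain ⟨φ, hφdiff, hφ0, hφgrad, hφbd, hφout⟩ := exists_perturb x₀ v hrpos
  refine ⟨fun x => g x + φ x, fun x hx => (hgdiff x hx).add (hφdiff x), ?_, by simp [hφ0], ?_, ?_⟩
  · intro x hx
    have hsx : δ ≤ s x := hmin x hx
    have h1 : δ ≤ g x - (⟪w, x⟫ + b - ε) := le_trans hsx (min_le_left _ _)
    have h2 : δ ≤ (⟪w, x⟫ + b + ε) - g x := le_trans hsx (min_le_right _ _)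
    have h3 := abs_le.mp (hφbd x)
    constructor
    · show ⟪w, x⟫ + b - ε < g x + φ x
      linarith [h3.1]
    · show g x + φ x < ⟪w, x⟫ + b + ε
      linarith [h3.2]
  · have H : HasGradientAt (fun x => g x + φ x) (gradient g x₀ + v) x₀ := by
      rw [hasGradientAt_iff_hasFDerivAt, map_add]
      exact (hgdiff x₀ hx₀).hasGradientAt.hasFDerivAt.add hφgrad.hasFDerivAt
    exact H.gradient
  · intro x hx
    show g x + φ x = g x
    rw [hφout x (le_trans hrr₀ hx), add_zero]

lemma rademacherMeasure_prob : IsProbabilityMeasure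
    ((2 : ℝ≥0∞)⁻¹ • Measure.dirac (-1 : ℝ) + (2 : ℝ≥0∞)⁻¹ • Measure.dirac (1 : ℝ)) := by
  constructor
  simp [ENNReal.inv_two_add_inv_two]

/-- Almost surely, every sample point lies in `X`, differs from `x₀`, and has a `±1` sign. -/
lemma ae_good {d : ℕ} (hd : 0 < d) {X : Set (EuclideanSpace ℝ (Fin d))}
    (hXmeas : MeasurableSet X)
    (μ : Measure (EuclideanSpace ℝ (Fin d))) [IsProbabilityMeasure μ]
    (ρ : EuclideanSpace ℝ (Fin d) → ℝ≥0∞)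
    (hdens : μ = volume.withDensity ρ) (hsupp : μ X = 1)
    (x₀ : EuclideanSpace ℝ (Fin d)) (n : ℕ) :
    ∀ᵐ ω ∂ sampleMeasure μ n, ∀ i : Fin n,
      (ω i).1 ∈ X ∧ (ω i).1 ≠ x₀ ∧ ((ω i).2 = -1 ∨ (ω i).2 = 1) := by
  haveI := rademacherMeasure_prob
  set ν : Measure ℝ :=
    (2 : ℝ≥0∞)⁻¹ • Measure.dirac (-1 : ℝ) + (2 : ℝ≥0∞)⁻¹ • Measure.dirac (1 : ℝ) with hν
  haveI : Nontrivial (EuclideanSpace ℝ (Fin d)) := by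
    refine nontrivial_of_ne (EuclideanSpace.single ⟨0, hd⟩ 1) 0 (fun h => ?_)
    have := congrArg (fun x : EuclideanSpace ℝ (Fin d) => x ⟨0, hd⟩) h
    simp [EuclideanSpace.single_apply] at this
  have hXc : μ Xᶜ = 0 := by
    rw [measure_compl hXmeas (measure_ne_top μ X), hsupp, measure_univ, tsub_self]
  have hx₀0 : μ {x₀} = 0 := by
    rw [hdens, withDensity_apply _ (measurableSet_singleton x₀),
      Measure.restrict_eq_zero.mpr (measure_singleton x₀), lintegral_zero_measure]
  have hpair : ∀ᵐ p : EuclideanSpace ℝ (Fin d) × ℝ ∂ μ.prod ν,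
      p.1 ∈ X ∧ p.1 ≠ x₀ ∧ (p.2 = -1 ∨ p.2 = 1) := by
    rw [ae_iff]
    apply measure_mono_null (t := (Xᶜ ∪ {x₀}) ×ˢ (Set.univ : Set ℝ) ∪
      (Set.univ : Set (EuclideanSpace ℝ (Fin d))) ×ˢ ({-1, 1} : Set ℝ)ᶜ)
    · rintro ⟨a, b⟩ hab
      simp only [Set.mem_setOf_eq, not_and_or, not_not, not_or] at hab
      rcases hab with h | h | h
      · exact Or.inl ⟨Or.inl h, Set.mem_univ _⟩
      · exact Or.inl ⟨Or.inr (by simpa using h), Set.mem_univ _⟩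
      · exact Or.inr ⟨Set.mem_univ _, by simp [h.1, h.2]⟩
    · apply measure_union_null
      · rw [Measure.prod_prod]
        have h0 : μ (Xᶜ ∪ {x₀}) = 0 := measure_union_null hXc hx₀0
        rw [Set.union_singleton] at h0
        simp [h0]
      · rw [Measure.prod_prod]
        have h0 : ν ({-1, 1} : Set ℝ)ᶜ = 0 := by
          rw [hν]
          simp only [Measure.add_apply, Measure.smul_apply, smul_eq_mul]
          rw [Measure.dirac_apply' _ (by measurability), Measure.dirac_apply' _ (by measurability)]
          simp
        simp [h0]
  rw [sampleMeasure]
  refine ae_all_iff.mpr fun i => ?_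
  exact (Measure.tendsto_eval_ae_ae (μ := fun _ : Fin n => μ.prod ν) (i := i)).eventually hpair

/-- **Gradient explanations on noisy linear functions are not informative.** -/
theorem gradient_noninformative_on_noisy_linear_functions
    {d : ℕ} (hd : 0 < d)
    (X : Set (EuclideanSpace ℝ (Fin d))) (hXcompact : IsCompact X)
    (μ : Measure (EuclideanSpace ℝ (Fin d))) [IsProbabilityMeasure μ]
    (ρ : EuclideanSpace ℝ (Fin d) → ℝ≥0∞)
    (hdens : μ = volume.withDensity ρ) (hpos : ∀ x ∈ X, 0 < ρ x) (hsupp : μ X = 1)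
    (M ε : ℝ) (hM : 0 < M) (hε : 0 < ε)
    (F : Set (EuclideanSpace ℝ (Fin d) → ℝ))
    (hF : F = {g | (∀ x ∈ X, DifferentiableAt ℝ g x) ∧
        ∃ (w : EuclideanSpace ℝ (Fin d)) (b : ℝ), ‖w‖ < M ∧ |b| < M ∧
          ∀ x ∈ X, ⟪w, x⟫ + b - ε < g x ∧ g x < ⟪w, x⟫ + b + ε})
    (f : EuclideanSpace ℝ (Fin d) → ℝ) (hf : f ∈ F)
    (x₀ : EuclideanSpace ℝ (Fin d)) (hx₀ : x₀ ∈ interior X)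
    (n : ℕ) (hn : 1 ≤ n) :
    {g ∈ F | g x₀ = f x₀ ∧ gradient g x₀ = gradient f x₀} ⊂ {g ∈ F | g x₀ = f x₀} ∧
    rademacher μ n {g ∈ F | g x₀ = f x₀ ∧ gradient g x₀ = gradient f x₀} =
      rademacher μ n {g ∈ F | g x₀ = f x₀} := by
  subst hF
  have hx₀X : x₀ ∈ X := interior_subset hx₀
  obtain ⟨hfdiff, wf, bf, hwf, hbf, htubef⟩ := hf
  set F : Set (EuclideanSpace ℝ (Fin d) → ℝ) :=
    {g | (∀ x ∈ X, DifferentiableAt ℝ g x) ∧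
        ∃ (w : EuclideanSpace ℝ (Fin d)) (b : ℝ), ‖w‖ < M ∧ |b| < M ∧
          ∀ x ∈ X, ⟪w, x⟫ + b - ε < g x ∧ g x < ⟪w, x⟫ + b + ε} with hFdef
  set Fe : Set (EuclideanSpace ℝ (Fin d) → ℝ) :=
    {g ∈ F | g x₀ = f x₀ ∧ gradient g x₀ = gradient f x₀} with hFe
  set Fp : Set (EuclideanSpace ℝ (Fin d) → ℝ) := {g ∈ F | g x₀ = f x₀} with hFp
  have hfF : f ∈ F := ⟨hfdiff, wf, bf, hwf, hbf, htubef⟩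
  have hsub : Fe ⊆ Fp := fun g hg => ⟨hg.1, hg.2.1⟩
  -- the per-point bound for members of F
  have hb : ∀ g ∈ F, ∀ x ∈ X, |g x| ≤ M * ‖x‖ + M + ε := by
    rintro g ⟨-, w, b, hw, hbb, ht⟩ x hx
    have hiw : |⟪w, x⟫| ≤ M * ‖x‖ :=
      (abs_real_inner_le_norm w x).trans (mul_le_mul_of_nonneg_right hw.le (norm_nonneg x))
    have h2 := abs_le.mp hiw
    have h3 := abs_lt.mp hbb
    have h4 := ht x hx
    rw [abs_le]
    constructor <;> linarith [h4.1, h4.2]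
  constructor
  · -- non-triviality
    obtain ⟨g', hg'diff, hg'tube, hg'x₀, hg'grad, -⟩ :=
      exists_shift hXcompact hfdiff htubef hx₀X (EuclideanSpace.single ⟨0, hd⟩ 1)
        (r₀ := 1) one_pos
    have hvne : (EuclideanSpace.single (⟨0, hd⟩ : Fin d) (1:ℝ)) ≠ 0 := by
      intro h
      have := congrArg (fun x : EuclideanSpace ℝ (Fin d) => x ⟨0, hd⟩) h
      simp [EuclideanSpace.single_apply] at this
    rw [Set.ssubset_iff_of_subset hsub]
    refine ⟨g', ⟨⟨hg'diff, wf, bf, hwf, hbf, hg'tube⟩, hg'x₀⟩, fun hmem => hvne ?_⟩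
    have h := hmem.2.2
    rw [hg'grad] at h
    exact add_eq_left.mp h
  · -- equal Rademacher complexities
    rw [rademacher, rademacher]
    refine integral_congr_ae ?_
    filter_upwards [ae_good hd hXcompact.isClosed.measurableSet μ ρ hdens hsupp x₀ n] with ω hω
    set T : (EuclideanSpace ℝ (Fin d) → ℝ) → ℝ :=
      fun g => (n : ℝ)⁻¹ * ∑ i, (ω i).2 * g (ω i).1 with hT
    show sSup (T '' Fe) = sSup (T '' Fp)
    have hTle : ∀ g ∈ F, T g ≤ (n : ℝ)⁻¹ * ∑ i, (M * ‖(ω i).1‖ + M + ε) := by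
      intro g hg
      apply mul_le_mul_of_nonneg_left (Finset.sum_le_sum fun i _ => ?_) (by positivity)
      have h1 := hb g hg _ (hω i).1
      have h2 : |(ω i).2| = 1 := by
        rcases (hω i).2.2 with h | h <;> rw [h] <;> simp
      calc (ω i).2 * g (ω i).1 ≤ |(ω i).2 * g (ω i).1| := le_abs_self _
        _ = |(ω i).2| * |g (ω i).1| := abs_mul _ _
        _ = |g (ω i).1| := by rw [h2, one_mul]
        _ ≤ M * ‖(ω i).1‖ + M + ε := h1
    have hbddp : BddAbove (T '' Fp) := by
      refine ⟨(n : ℝ)⁻¹ * ∑ i, (M * ‖(ω i).1‖ + M + ε), ?_⟩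
      rintro y ⟨g, hg, rfl⟩
      exact hTle g hg.1
    have hbdde : BddAbove (T '' Fe) := hbddp.mono (Set.image_mono hsub)
    have hfe : f ∈ Fe := ⟨hfF, rfl, rfl⟩
    apply le_antisymm
    · exact csSup_le_csSup hbddp ⟨T f, f, hfe, rfl⟩ (Set.image_mono hsub)
    · refine csSup_le ⟨T f, f, hsub hfe, rfl⟩ ?_
      rintro y ⟨g, hgFp, rfl⟩
      obtain ⟨hgF, hgx₀⟩ := hgFp
      obtain ⟨hgdiff, w, b, hw, hbb, htube⟩ := hgF
      haveI : Nonempty (Fin n) := ⟨⟨0, hn⟩⟩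
      set r₀ : ℝ := Finset.univ.inf' Finset.univ_nonempty
        (fun i : Fin n => dist ((ω i).1) x₀) with hr₀def
      have hr₀ : 0 < r₀ := by
        rw [hr₀def, Finset.lt_inf'_iff]
        exact fun i _ => dist_pos.mpr (hω i).2.1
      obtain ⟨g', hd', ht', hx', hgr', hout'⟩ :=
        exists_shift hXcompact hgdiff htube hx₀X (gradient f x₀ - gradient g x₀) hr₀
      have hg'Fe : g' ∈ Fe := by
        refine ⟨⟨hd', w, b, hw, hbb, ht'⟩, hx'.trans hgx₀, ?_⟩
        rw [hgr']; abel
      have hTg : T g' = T g := by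
        show (n : ℝ)⁻¹ * ∑ i, (ω i).2 * g' (ω i).1 = (n : ℝ)⁻¹ * ∑ i, (ω i).2 * g (ω i).1
        congr 1
        apply Finset.sum_congr rfl
        intro i _
        rw [hout' _ (Finset.inf'_le _ (Finset.mem_univ i))]
      calc T g = T g' := hTg.symm
        _ ≤ sSup (T '' Fe) := le_csSup hbdde ⟨g', hg'Fe, rfl⟩
end

section
/- Let X = ℝ^d with a probability distribution P having a density with respect to Lebesgue measure. Let F = T_∞ be the class of axis-parallel decision trees on ℝ^d of arbitrary finite depth with values in [−1,1]. Fix f ∈ T_∞, x_0 ∈ ℝ^d, and an anchor explanation (R, p) consisting of an axis-aligned box rule R with x_0 ∈ X_R, P(X_R) > 0, and precision prec(R, f, x_0) = p with 0 < p < 1. Then for every n ∈ ℕ the anchor explanation is non-informative: R_n(F_explain) = R_n(F_predict). -/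
open MeasureTheory
open scoped ENNReal

/-- Axis-parallel decision trees of depth at most `K`, defined inductively: a tree of
depth `0` is a constant function; a tree of depth at most `K+1` is either a tree of depth
at most `K`, or a threshold split on some coordinate between two trees of depth at most `K`. -/
def IsTree {d : ℕ} : ℕ → ((Fin d → ℝ) → ℝ) → Prop
  | 0, g => ∃ c : ℝ, g = fun _ => c
  | K + 1, g => IsTree K g ∨
      ∃ (j : Fin d) (t : ℝ) (g₁ g₂ : (Fin d → ℝ) → ℝ), IsTree K g₁ ∧ IsTree K g₂ ∧
        g = fun x => if x j ≤ t then g₁ x else g₂ x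

/-- The precision of the box `XR` for the scoring function `g` at `x₀`:
the conditional probability under `μ` that a point of `XR` receives the same
classification label `sign (g x)` as `x₀`. -/
noncomputable def precision {d : ℕ} (μ : Measure (Fin d → ℝ)) (XR : Set (Fin d → ℝ))
    (g : (Fin d → ℝ) → ℝ) (x₀ : Fin d → ℝ) : ℝ :=
  (μ {x | x ∈ XR ∧ Real.sign (g x) = Real.sign (g x₀)}).toReal / (μ XR).toReal

open Filter
open scoped Topology

lemma isTree_succ {d K} {g : (Fin d → ℝ) → ℝ} (h : IsTree K g) : IsTree (K+1) g := Or.inl h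

lemma isTree_mono {d K K'} {g : (Fin d → ℝ) → ℝ} (h : IsTree K g) (hK : K ≤ K') : IsTree K' g := by
  induction hK with
  | refl => exact h
  | step _ ih => exact Or.inl ih

lemma isTree_const {d : ℕ} (c : ℝ) (K : ℕ) : IsTree (d := d) K (fun _ => c) :=
  isTree_mono (show IsTree 0 (fun _ => c) from ⟨c, rfl⟩) (Nat.zero_le K)

lemma isTree_split {d K} (j : Fin d) (t : ℝ) {g₁ g₂ : (Fin d → ℝ) → ℝ}
    (h₁ : IsTree K g₁) (h₂ : IsTree K g₂) :
    IsTree (K+1) (fun x => if x j ≤ t then g₁ x else g₂ x) :=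
  Or.inr ⟨j, t, g₁, g₂, h₁, h₂, rfl⟩

noncomputable def patchFn {d : ℕ} [NeZero d] (δ : ℝ) (g0 : (Fin d → ℝ) → ℝ) :
    List (ℝ × ℝ) → (Fin d → ℝ) → ℝ
  | [] => g0
  | tv :: L => fun x =>
      if x 0 ≤ tv.1 then (if x 0 ≤ tv.1 - δ then patchFn δ g0 L x else tv.2)
      else patchFn δ g0 L x

lemma patchFn_isTree {d : ℕ} [NeZero d] (δ : ℝ) (g0 : (Fin d → ℝ) → ℝ) {K : ℕ}
    (h : IsTree K g0) : ∀ L : List (ℝ × ℝ), IsTree (K + 2 * L.length) (patchFn δ g0 L)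
  | [] => h
  | tv :: L => by
    have ih := patchFn_isTree δ g0 h L
    have h1 : IsTree (K + 2 * L.length + 1)
        (fun x => if x 0 ≤ tv.1 - δ then patchFn δ g0 L x else tv.2) :=
      isTree_split 0 (tv.1 - δ) ih (isTree_const _ _)
    have h2 : IsTree (K + 2 * (tv :: L).length)
        (fun x => if x 0 ≤ tv.1 then (if x 0 ≤ tv.1 - δ then patchFn δ g0 L x else tv.2)
          else patchFn δ g0 L x) := by
      have := isTree_split 0 tv.1 h1 (isTree_succ ih)
      have hlen : K + 2 * L.length + 1 + 1 = K + 2 * (tv :: L).length := by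
        simp [List.length_cons]; ring
      rw [hlen] at this
      exact this
    exact h2

lemma patchFn_mem_Icc {d : ℕ} [NeZero d] (δ : ℝ) (g0 : (Fin d → ℝ) → ℝ)
    (hg0 : ∀ x, g0 x ∈ Set.Icc (-1:ℝ) 1) :
    ∀ L : List (ℝ × ℝ), (∀ tv ∈ L, tv.2 ∈ Set.Icc (-1:ℝ) 1) →
      ∀ x, patchFn δ g0 L x ∈ Set.Icc (-1:ℝ) 1
  | [] , _, x => hg0 x
  | tv :: L, hL, x => by
    have ih := patchFn_mem_Icc δ g0 hg0 L (fun a ha => hL a (List.mem_cons_of_mem _ ha)) x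
    simp only [patchFn]
    split_ifs with h1 h2
    · exact ih
    · exact hL tv List.mem_cons_self
    · exact ih

lemma patchFn_eval_mem {d : ℕ} [NeZero d] (δ : ℝ) (g0 : (Fin d → ℝ) → ℝ)
    {L : List (ℝ × ℝ)}
    (hdisj : L.Pairwise fun a b => Disjoint (Set.Ioc (a.1 - δ) a.1) (Set.Ioc (b.1 - δ) b.1))
    {tv : ℝ × ℝ} (htv : tv ∈ L) {x : Fin d → ℝ} (hx : x 0 ∈ Set.Ioc (tv.1 - δ) tv.1) :
    patchFn δ g0 L x = tv.2 := by
  induction L with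
  | nil => simp at htv
  | cons a L ih =>
    rcases List.mem_cons.1 htv with rfl | hmem
    · simp only [patchFn, if_pos hx.2, if_neg (not_le.2 hx.1)]
    · have hd := (List.pairwise_cons.1 hdisj).1 tv hmem
      have hxa : x 0 ∉ Set.Ioc (a.1 - δ) a.1 := fun h => (hd.le_bot ⟨h, hx⟩ : _)
      simp only [patchFn]
      have ihx := ih (List.pairwise_cons.1 hdisj).2 hmem
      split_ifs with h1 h2
      · exact ihx
      · exact absurd ⟨not_le.1 h2, h1⟩ hxa
      · exact ihx

lemma patchFn_eval_notMem {d : ℕ} [NeZero d] (δ : ℝ) (g0 : (Fin d → ℝ) → ℝ)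
    {L : List (ℝ × ℝ)} {x : Fin d → ℝ}
    (hx : ∀ tv ∈ L, x 0 ∉ Set.Ioc (tv.1 - δ) tv.1) :
    patchFn δ g0 L x = g0 x := by
  induction L with
  | nil => rfl
  | cons a L ih =>
    have hxa := hx a List.mem_cons_self
    simp only [patchFn]
    have ihx := ih (fun tv h => hx tv (List.mem_cons_of_mem _ h))
    split_ifs with h1 h2
    · exact ihx
    · exact absurd ⟨not_le.1 h2, h1⟩ hxa
    · exact ihx

lemma exists_cdf_eq {α : Type*} [MeasurableSpace α] (μ : Measure α) [IsFiniteMeasure μ]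
    (h : α → ℝ) (hh : Measurable h) (hnull : ∀ t : ℝ, μ {x | h x = t} = 0)
    (A : Set α) (hA : MeasurableSet A) (q : ℝ) (hq0 : 0 < q) (hq1 : q < (μ A).toReal) :
    ∃ c : ℝ, (μ (A ∩ {x | h x ≤ c})).toReal = q := by
  set G : ℝ → ℝ := fun t => (μ (A ∩ {x | h x ≤ t})).toReal with hG
  have hmeas : ∀ t : ℝ, MeasurableSet (A ∩ {x | h x ≤ t}) := fun t =>
    hA.inter (hh measurableSet_Iic)
  have hmono : Monotone G := fun a b hab =>
    ENNReal.toReal_mono (measure_ne_top _ _)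
      (measure_mono (Set.inter_subset_inter_right _ fun x hx => le_trans hx hab))
  -- ∃ t2 with q ≤ G t2
  have htop : Tendsto (fun m : ℕ => G m) atTop (𝓝 (μ A).toReal) := by
    have hmon : Monotone fun m : ℕ => A ∩ {x | h x ≤ (m:ℝ)} := by
      intro a b hab
      apply Set.inter_subset_inter_right
      intro x hx
      simp only [Set.mem_setOf_eq] at hx ⊢
      exact le_trans hx (by exact_mod_cast hab)
    have := tendsto_measure_iUnion_atTop (μ := μ) hmon
    have hU : (⋃ m : ℕ, A ∩ {x | h x ≤ (m:ℝ)}) = A := by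
      ext x
      simp only [Set.mem_iUnion, Set.mem_inter_iff, Set.mem_setOf_eq]
      constructor
      · rintro ⟨m, hx, _⟩; exact hx
      · intro hx
        obtain ⟨m, hm⟩ := exists_nat_ge (h x)
        exact ⟨m, hx, hm⟩
    rw [hU] at this
    exact (ENNReal.tendsto_toReal (measure_ne_top _ _)).comp this
  have ht2 : ∃ t2 : ℝ, q < G t2 := by
    have := htop.eventually (eventually_gt_nhds hq1)
    obtain ⟨m, hm⟩ := this.exists
    exact ⟨m, hm⟩
  -- ∃ t1 with G t1 < q
  have hbot : Tendsto (fun m : ℕ => G (-(m:ℝ))) atTop (𝓝 0) := by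
    have hant : Antitone fun m : ℕ => A ∩ {x | h x ≤ -(m:ℝ)} := by
      intro a b hab
      apply Set.inter_subset_inter_right
      intro x hx
      simp only [Set.mem_setOf_eq] at hx ⊢
      have : (a:ℝ) ≤ b := by exact_mod_cast hab
      linarith
    have := tendsto_measure_iInter_atTop (μ := μ)
      (fun m => (hmeas _).nullMeasurableSet) hant ⟨0, measure_ne_top _ _⟩
    have hI : (⋂ m : ℕ, A ∩ {x | h x ≤ -(m:ℝ)}) = ∅ := by
      ext x
      simp only [Set.mem_iInter, Set.mem_inter_iff, Set.mem_setOf_eq, Set.mem_empty_iff_false,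
        iff_false, not_forall]
      obtain ⟨m, hm⟩ := exists_nat_gt (-(h x))
      exact ⟨m, fun hc => absurd hc.2 (by push_neg; linarith)⟩
    rw [hI, measure_empty] at this
    have := (ENNReal.tendsto_toReal (by simp)).comp this
    rw [ENNReal.toReal_zero] at this
    exact this
  have ht1 : ∃ t1 : ℝ, G t1 < q := by
    have := hbot.eventually (eventually_lt_nhds hq0)
    obtain ⟨m, hm⟩ := this.exists
    exact ⟨-(m:ℝ), hm⟩
  obtain ⟨t2, ht2⟩ := ht2
  obtain ⟨t1, ht1⟩ := ht1
  set S : Set ℝ := {t | q ≤ G t} with hS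
  have hSne : S.Nonempty := ⟨t2, le_of_lt ht2⟩
  have hSbdd : BddBelow S := by
    refine ⟨t1, fun t ht => ?_⟩
    by_contra hc
    push_neg at hc
    exact absurd (le_trans ht (hmono hc.le)) (not_le.2 ht1)
  set c := sInf S with hc
  refine ⟨c, le_antisymm ?_ ?_⟩
  · -- G c ≤ q via left limits
    have hmon : Monotone fun m : ℕ => A ∩ {x | h x ≤ c - 1/(m+1)} := by
      intro a b hab
      apply Set.inter_subset_inter_right
      intro x hx
      simp only [Set.mem_setOf_eq] at hx ⊢
      have hba : (1:ℝ)/(b+1) ≤ 1/(a+1) := by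
        apply one_div_le_one_div_of_le
        · positivity
        · have : (a:ℝ) ≤ b := by exact_mod_cast hab
          linarith
      linarith
    have hU : (⋃ m : ℕ, A ∩ {x | h x ≤ c - 1/(m+1)}) = A ∩ {x | h x < c} := by
      ext x
      simp only [Set.mem_iUnion, Set.mem_inter_iff, Set.mem_setOf_eq]
      constructor
      · rintro ⟨m, hx, hm⟩
        exact ⟨hx, lt_of_le_of_lt hm (by
          have : (0:ℝ) < 1/(m+1) := by positivity
          linarith)⟩
      · rintro ⟨hx, hlt⟩
        obtain ⟨m, hm⟩ := exists_nat_one_div_lt (sub_pos.2 hlt)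
        exact ⟨m, hx, by push_cast at hm ⊢; linarith⟩
    have hEq : μ (A ∩ {x | h x < c}) = μ (A ∩ {x | h x ≤ c}) := by
      have hsub : (A ∩ {x | h x < c}) ⊆ (A ∩ {x | h x ≤ c}) := by
        rintro x ⟨h1, h2⟩
        simp only [Set.mem_setOf_eq, Set.mem_inter_iff] at h2 ⊢
        exact ⟨h1, le_of_lt h2⟩
      refine le_antisymm (measure_mono hsub) ?_
      calc μ (A ∩ {x | h x ≤ c}) ≤ μ ((A ∩ {x | h x < c}) ∪ {x | h x = c}) := by
            apply measure_mono
            rintro x ⟨hxA, hxc⟩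
            simp only [Set.mem_setOf_eq] at hxc
            rcases lt_or_eq_of_le hxc with h' | h'
            · exact Or.inl ⟨hxA, h'⟩
            · exact Or.inr h'
        _ ≤ μ (A ∩ {x | h x < c}) + μ {x | h x = c} := measure_union_le _ _
        _ = μ (A ∩ {x | h x < c}) := by rw [hnull c, add_zero]
    have htd := tendsto_measure_iUnion_atTop (μ := μ) hmon
    rw [hU, hEq] at htd
    have htd' : Tendsto (fun m : ℕ => G (c - 1/(m+1))) atTop (𝓝 (G c)) :=
      (ENNReal.tendsto_toReal (measure_ne_top _ _)).comp htd
    refine le_of_tendsto htd' (Eventually.of_forall fun m => ?_)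
    have hnot : c - 1/(m+1) ∉ S := fun hmem => by
      have := csInf_le hSbdd hmem
      have h0 : (0:ℝ) < 1/(m+1) := by positivity
      rw [← hc] at this
      linarith
    exact le_of_not_ge fun hq => hnot hq
  · -- q ≤ G c via right limits
    have hant : Antitone fun m : ℕ => A ∩ {x | h x ≤ c + 1/(m+1)} := by
      intro a b hab
      apply Set.inter_subset_inter_right
      intro x hx
      simp only [Set.mem_setOf_eq] at hx ⊢
      have hba : (1:ℝ)/(b+1) ≤ 1/(a+1) := by
        apply one_div_le_one_div_of_le
        · positivity
        · have : (a:ℝ) ≤ b := by exact_mod_cast hab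
          linarith
      linarith
    have hI : (⋂ m : ℕ, A ∩ {x | h x ≤ c + 1/(m+1)}) = A ∩ {x | h x ≤ c} := by
      ext x
      simp only [Set.mem_iInter, Set.mem_inter_iff, Set.mem_setOf_eq]
      constructor
      · intro hx
        refine ⟨(hx 0).1, ?_⟩
        by_contra hcx
        push_neg at hcx
        obtain ⟨m, hm⟩ := exists_nat_one_div_lt (sub_pos.2 hcx)
        have := (hx m).2
        push_cast at hm this ⊢
        linarith
      · rintro ⟨hx, hxc⟩ m
        refine ⟨hx, ?_⟩
        have h0 : (0:ℝ) < 1/((m:ℝ)+1) := by positivity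
        linarith
    have htd := tendsto_measure_iInter_atTop (μ := μ)
      (fun m => (hmeas _).nullMeasurableSet) hant ⟨0, measure_ne_top _ _⟩
    rw [hI] at htd
    have htd' : Tendsto (fun m : ℕ => G (c + 1/(m+1))) atTop (𝓝 (G c)) :=
      (ENNReal.tendsto_toReal (measure_ne_top _ _)).comp htd
    refine ge_of_tendsto htd' (Eventually.of_forall fun m => ?_)
    have h0 : (0:ℝ) < 1/(m+1) := by positivity
    obtain ⟨t, htS, htlt⟩ := exists_lt_of_csInf_lt hSne (show sInf S < c + 1/(m+1) by rw [← hc]; linarith)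
    exact le_trans htS (hmono htlt.le)
lemma Ioc_disjoint_of_gap {t t' δ : ℝ} (hne : t ≠ t') (hgap : δ ≤ |t - t'|) :
    Disjoint (Set.Ioc (t - δ) t) (Set.Ioc (t' - δ) t') := by
  rw [Set.disjoint_left]
  rintro z ⟨hz1, hz2⟩ ⟨hz1', hz2'⟩
  rcases abs_cases (t - t') with ⟨habs, _⟩ | ⟨habs, _⟩ <;> rw [habs] at hgap <;> linarith

lemma sign_mem_Icc {s : ℝ} (hs : s = -1 ∨ s = 0 ∨ s = 1) : s ∈ Set.Icc (-1:ℝ) 1 := by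
  rcases hs with rfl | rfl | rfl <;> norm_num

lemma sign_self {s : ℝ} (hs : s = -1 ∨ s = 0 ∨ s = 1) : Real.sign s = s := by
  rcases hs with rfl | rfl | rfl
  · exact Real.sign_of_neg (by norm_num)
  · exact Real.sign_zero
  · exact Real.sign_of_pos (by norm_num)

lemma construction {d : ℕ} [NeZero d] (μ : Measure (Fin d → ℝ)) [IsProbabilityMeasure μ]
    (hnull : ∀ t : ℝ, μ {x | x 0 = t} = 0)
    (XR : Set (Fin d → ℝ)) (hXRm : MeasurableSet XR) (hcov : 0 < μ XR)
    (p : ℝ) (hp₀ : 0 < p) (hp₁ : p < 1)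
    {k : ℕ} (τ : Fin k → ℝ) (hτ : Function.Injective τ) (v : Fin k → ℝ)
    (hv : ∀ i, v i ∈ Set.Icc (-1:ℝ) 1) (s : ℝ) (hs : s = -1 ∨ s = 0 ∨ s = 1) :
    ∃ g : (Fin d → ℝ) → ℝ, (∃ K, IsTree K g) ∧ (∀ x, g x ∈ Set.Icc (-1:ℝ) 1) ∧
      (∀ (i : Fin k) (x : Fin d → ℝ), x 0 = τ i → g x = v i) ∧
      (μ {x | x ∈ XR ∧ Real.sign (g x) = s}).toReal = p * (μ XR).toReal := by
  have hXRtop : μ XR ≠ ⊤ := measure_ne_top _ _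
  have hXRpos : 0 < (μ XR).toReal := ENNReal.toReal_pos hcov.ne' hXRtop
  -- choose δ
  set ε : ℝ≥0∞ := ENNReal.ofReal (min p (1-p) * (μ XR).toReal) with hε
  have hεpos : 0 < ε := by
    apply ENNReal.ofReal_pos.2
    have : 0 < min p (1-p) := lt_min hp₀ (by linarith)
    positivity
  have hBi : ∀ i : Fin k, Tendsto (fun m : ℕ => μ {x | x 0 ∈ Set.Ioc (τ i - 1/(m+1)) (τ i)})
      atTop (𝓝 0) := by
    intro i
    have hant : Antitone fun m : ℕ => {x : Fin d → ℝ | x 0 ∈ Set.Ioc (τ i - 1/(m+1)) (τ i)} := by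
      intro a b hab x hx
      simp only [Set.mem_setOf_eq, Set.mem_Ioc] at hx ⊢
      have hba : (1:ℝ)/(b+1) ≤ 1/(a+1) := by
        apply one_div_le_one_div_of_le
        · positivity
        · have : (a:ℝ) ≤ b := by exact_mod_cast hab
          linarith
      exact ⟨by linarith [hx.1], hx.2⟩
    have hI : (⋂ m : ℕ, {x : Fin d → ℝ | x 0 ∈ Set.Ioc (τ i - 1/(m+1)) (τ i)})
        = {x | x 0 = τ i} := by
      ext x
      simp only [Set.mem_iInter, Set.mem_setOf_eq, Set.mem_Ioc]
      constructor
      · intro hx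
        refine le_antisymm (hx 0).2 ?_
        by_contra hcx
        push_neg at hcx
        obtain ⟨m, hm⟩ := exists_nat_one_div_lt (sub_pos.2 hcx)
        have := (hx m).1
        linarith
      · intro hx m
        have h0 : (0:ℝ) < 1/((m:ℝ)+1) := by positivity
        exact ⟨by linarith [hx.le, hx.ge], hx.le⟩
    have hmeas : ∀ m : ℕ, MeasurableSet {x : Fin d → ℝ | x 0 ∈ Set.Ioc (τ i - 1/(m+1)) (τ i)} :=
      fun m => (measurable_pi_apply 0) measurableSet_Ioc
    have := tendsto_measure_iInter_atTop (μ := μ) (fun m => (hmeas m).nullMeasurableSet)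
      hant ⟨0, measure_ne_top _ _⟩
    rw [hI, hnull (τ i)] at this
    exact this
  have hsum : Tendsto (fun m : ℕ => ∑ i : Fin k, μ {x | x 0 ∈ Set.Ioc (τ i - 1/(m+1)) (τ i)})
      atTop (𝓝 0) := by
    have := tendsto_finset_sum (f := fun (i : Fin k) (m : ℕ) =>
      μ {x | x 0 ∈ Set.Ioc (τ i - 1/(m+1)) (τ i)}) (a := fun _ => 0) Finset.univ
      (fun i _ => hBi i)
    simpa using this
  have hev1 : ∀ᶠ m : ℕ in atTop,
      (∑ i : Fin k, μ {x | x 0 ∈ Set.Ioc (τ i - 1/(m+1)) (τ i)}) < ε :=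
    hsum.eventually_lt_const hεpos
  have hev2 : ∀ᶠ m : ℕ in atTop, ∀ ij : Fin k × Fin k, ij.1 ≠ ij.2 →
      (1:ℝ)/(m+1) ≤ |τ ij.1 - τ ij.2| := by
    rw [eventually_all]
    intro ij
    rcases eq_or_ne ij.1 ij.2 with h | h
    · exact Eventually.of_forall fun m hij => absurd h hij
    · have hpos : 0 < |τ ij.1 - τ ij.2| := abs_pos.2 (sub_ne_zero.2 fun hc => h (hτ hc))
      have := tendsto_one_div_add_atTop_nhds_zero_nat.eventually_lt_const hpos
      exact this.mono fun m hm _ => hm.le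
  obtain ⟨m, hm1, hm2⟩ := (hev1.and hev2).exists
  set δ : ℝ := 1/(m+1) with hδ
  have hδ0 : (0:ℝ) < δ := by positivity
  -- the sets
  set U : Set ℝ := ⋃ i : Fin k, Set.Ioc (τ i - δ) (τ i) with hU
  set Uag : Set ℝ := ⋃ i : Fin k,
    (if Real.sign (v i) = s then Set.Ioc (τ i - δ) (τ i) else ∅) with hUag
  have hUm : MeasurableSet U := MeasurableSet.iUnion fun i => measurableSet_Ioc
  have hUagm : MeasurableSet Uag := MeasurableSet.iUnion fun i => by
    split_ifs
    · exact measurableSet_Ioc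
    · exact MeasurableSet.empty
  have hUagU : Uag ⊆ U := by
    intro z hz
    simp only [hUag, Set.mem_iUnion] at hz
    obtain ⟨i, hi⟩ := hz
    by_cases h : Real.sign (v i) = s
    · rw [if_pos h] at hi
      exact Set.mem_iUnion.2 ⟨i, hi⟩
    · rw [if_neg h] at hi
      exact absurd hi (Set.notMem_empty _)
  set PU : Set (Fin d → ℝ) := {x | x 0 ∈ U} with hPU
  set PUag : Set (Fin d → ℝ) := {x | x 0 ∈ Uag} with hPUag
  have hPUm : MeasurableSet PU := (measurable_pi_apply 0) hUm
  have hPUagm : MeasurableSet PUag := (measurable_pi_apply 0) hUagm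
  set A : Set (Fin d → ℝ) := XR \ PU with hA
  have hAm : MeasurableSet A := hXRm.diff hPUm
  set γ : ℝ≥0∞ := μ (XR ∩ PU) with hγ
  set α : ℝ≥0∞ := μ (XR ∩ PUag) with hα
  have hαγ : α ≤ γ := measure_mono (Set.inter_subset_inter_right _ fun x hx => hUagU hx)
  have hγε : γ < ε := by
    refine lt_of_le_of_lt ?_ hm1
    calc γ ≤ μ PU := measure_mono Set.inter_subset_right
      _ = μ (⋃ i : Fin k, {x | x 0 ∈ Set.Ioc (τ i - δ) (τ i)}) := by
          congr 1
          ext x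
          simp [hPU, hU, Set.mem_iUnion]
      _ ≤ ∑ i : Fin k, μ {x | x 0 ∈ Set.Ioc (τ i - δ) (τ i)} := measure_iUnion_fintype_le _ _
  have hγtop : γ ≠ ⊤ := measure_ne_top _ _
  have hαtop : α ≠ ⊤ := measure_ne_top _ _
  have hγlt : γ.toReal < min p (1-p) * (μ XR).toReal :=
    ENNReal.toReal_lt_of_lt_ofReal hγε
  have hαle : α.toReal ≤ γ.toReal := ENNReal.toReal_mono hγtop hαγ
  have hminp : min p (1-p) ≤ p := min_le_left _ _
  have hminp' : min p (1-p) ≤ 1-p := min_le_right _ _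
  have hmin1 : min p (1-p) * (μ XR).toReal ≤ p * (μ XR).toReal := by nlinarith
  have hmin2 : min p (1-p) * (μ XR).toReal ≤ (1-p) * (μ XR).toReal := by nlinarith
  -- split μ XR
  have hsplit : μ XR = μ A + γ := by
    rw [hγ, hA]
    rw [← measure_diff_add_inter XR hPUm]
  have hAtoReal : (μ A).toReal = (μ XR).toReal - γ.toReal := by
    rw [hsplit, ENNReal.toReal_add (measure_ne_top _ _) hγtop]
    ring
  set q : ℝ := p * (μ XR).toReal - α.toReal with hq
  have hq0 : 0 < q := by
    have : α.toReal < p * (μ XR).toReal := by linarith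
    linarith
  have hq1 : q < (μ A).toReal := by
    have h0α : 0 ≤ α.toReal := ENNReal.toReal_nonneg
    rw [hAtoReal]
    have : γ.toReal < (1-p) * (μ XR).toReal := lt_of_lt_of_le hγlt hmin2
    nlinarith [hαle]
  obtain ⟨c, hcq⟩ := exists_cdf_eq μ (fun x => x 0) (measurable_pi_apply 0) hnull A hAm q hq0 hq1
  -- build g
  set b : ℝ := if s = 1 then (-1:ℝ) else 1 with hb
  set base : (Fin d → ℝ) → ℝ := fun x => if x 0 ≤ c then s else b with hbase
  set L : List (ℝ × ℝ) := (List.finRange k).map (fun i => (τ i, v i)) with hL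
  set g : (Fin d → ℝ) → ℝ := patchFn δ base L with hg
  have hbasetree : IsTree 1 base := isTree_split 0 c (isTree_const s 0) (isTree_const b 0)
  have hdisj : L.Pairwise fun a b => Disjoint (Set.Ioc (a.1 - δ) a.1) (Set.Ioc (b.1 - δ) b.1) := by
    rw [hL, List.pairwise_map]
    refine (List.nodup_finRange k).imp ?_
    intro i j hij
    exact Ioc_disjoint_of_gap (fun hc => hij (hτ hc)) (hm2 (i, j) hij)
  -- eval characterizations
  have heval_in : ∀ (i : Fin k) (x : Fin d → ℝ), x 0 ∈ Set.Ioc (τ i - δ) (τ i) → g x = v i := by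
    intro i x hx
    exact patchFn_eval_mem δ base hdisj (by
      rw [hL]
      exact List.mem_map.2 ⟨i, List.mem_finRange i, rfl⟩) hx
  have heval_out : ∀ x : Fin d → ℝ, x 0 ∉ U → g x = base x := by
    intro x hx
    apply patchFn_eval_notMem
    rintro tv htv hmem
    rw [hL] at htv
    obtain ⟨i, _, rfl⟩ := List.mem_map.1 htv
    exact hx (Set.mem_iUnion.2 ⟨i, hmem⟩)
  have hsigns : Real.sign s = s := sign_self hs
  have hsignb : Real.sign b ≠ s := by
    rw [hb]
    split_ifs with h1
    · rw [Real.sign_of_neg (by norm_num : (-1:ℝ) < 0), h1]; norm_num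
    · rw [Real.sign_of_pos (by norm_num : (0:ℝ) < 1)]
      exact fun hc => h1 hc.symm
  -- set equality
  have hsetEq : {x | x ∈ XR ∧ Real.sign (g x) = s}
      = (XR ∩ PUag) ∪ (A ∩ {x | x 0 ≤ c}) := by
    ext x
    simp only [Set.mem_setOf_eq, Set.mem_union, Set.mem_inter_iff, hA, Set.mem_diff]
    constructor
    · rintro ⟨hxXR, hsign⟩
      by_cases hxU : x 0 ∈ U
      · left
        obtain ⟨i, hi⟩ := Set.mem_iUnion.1 hxU
        have := heval_in i x hi
        rw [this] at hsign
        refine ⟨hxXR, ?_⟩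
        simp only [hPUag, Set.mem_setOf_eq, hUag, Set.mem_iUnion]
        exact ⟨i, by rw [if_pos hsign]; exact hi⟩
      · right
        have hbx := heval_out x hxU
        rw [hbx, hbase] at hsign
        dsimp only at hsign
        by_cases hxc : x 0 ≤ c
        · exact ⟨⟨hxXR, fun hc => hxU hc⟩, hxc⟩
        · rw [if_neg hxc] at hsign
          exact absurd hsign hsignb
    · rintro (⟨hxXR, hxag⟩ | ⟨⟨hxXR, hxU⟩, hxc⟩)
      · refine ⟨hxXR, ?_⟩
        simp only [hPUag, Set.mem_setOf_eq, hUag, Set.mem_iUnion] at hxag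
        obtain ⟨i, hi⟩ := hxag
        by_cases h : Real.sign (v i) = s
        · rw [if_pos h] at hi
          rw [heval_in i x hi]
          exact h
        · rw [if_neg h] at hi
          exact absurd hi (Set.notMem_empty _)
      · have hxUmem : x 0 ∉ U := fun hc => hxU hc
        refine ⟨hxXR, ?_⟩
        rw [heval_out x hxUmem, hbase]
        dsimp only
        rw [if_pos hxc]
        exact hsigns
  -- measure computation
  have hdisj2 : Disjoint (XR ∩ PUag) (A ∩ {x | x 0 ≤ c}) := by
    rw [Set.disjoint_left]
    rintro x ⟨_, hxag⟩ ⟨⟨_, hxU⟩, _⟩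
    exact hxU (hUagU hxag)
  have hmeasEq : μ {x | x ∈ XR ∧ Real.sign (g x) = s} = α + μ (A ∩ {x | x 0 ≤ c}) := by
    rw [hsetEq, measure_union hdisj2 (hAm.inter ((measurable_pi_apply 0) measurableSet_Iic))]
  refine ⟨g, ⟨1 + 2 * L.length, patchFn_isTree δ base hbasetree L⟩, ?_, ?_, ?_⟩
  · -- values in Icc
    apply patchFn_mem_Icc δ base
    · intro x
      rw [hbase]
      dsimp only
      split_ifs
      · exact sign_mem_Icc hs
      · rw [hb]
        split_ifs <;> norm_num
    · intro tv htv
      rw [hL] at htv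
      obtain ⟨i, _, rfl⟩ := List.mem_map.1 htv
      exact hv i
  · intro i x hx
    exact heval_in i x (by rw [hx]; exact ⟨by linarith, le_refl _⟩)
  · rw [hmeasEq, ENNReal.toReal_add hαtop (measure_ne_top _ _), hcq, hq]
    ring

lemma pi_pair_null {n : ℕ} {β : Type*} [MeasurableSpace β] (ν : Measure β)
    [IsProbabilityMeasure ν] {C : Set (β × β)} (hC : MeasurableSet C)
    (hνC : ν.prod ν C = 0) {i j : Fin n} (hij : i ≠ j) :
    Measure.pi (fun _ : Fin n => ν) {ω | (ω i, ω j) ∈ C} = 0 := by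
  have hT : Measurable fun ω : Fin n → β => (ω i, ω j) :=
    (measurable_pi_apply i).prodMk (measurable_pi_apply j)
  have hmap : Measure.map (fun ω : Fin n → β => (ω i, ω j)) (Measure.pi fun _ => ν)
      = ν.prod ν := by
    refine (Measure.prod_eq fun s t hs ht => ?_).symm
    rw [Measure.map_apply hT (hs.prod ht)]
    have hset : (fun ω : Fin n → β => (ω i, ω j)) ⁻¹' (s ×ˢ t)
        = Set.pi Set.univ (fun k => if k = j then t else if k = i then s else Set.univ) := by
      ext ω
      simp only [Set.mem_preimage, Set.mem_prod, Set.mem_pi, Set.mem_univ, true_implies]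
      constructor
      · rintro ⟨h1, h2⟩ k
        split_ifs with hkj hki
        · exact hkj ▸ h2
        · exact hki ▸ h1
        · trivial
      · intro h
        constructor
        · have := h i
          rw [if_neg hij, if_pos rfl] at this
          exact this
        · have := h j
          rw [if_pos rfl] at this
          exact this
    rw [hset, Measure.pi_pi]
    have hprod : (∏ k : Fin n, ν (if k = j then t else if k = i then s else Set.univ))
        = ν s * ν t := by
      rw [← Finset.mul_prod_erase Finset.univ _ (Finset.mem_univ j), if_pos rfl]
      rw [← Finset.mul_prod_erase _ _ (Finset.mem_erase.2 ⟨hij, Finset.mem_univ i⟩),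
        if_neg hij, if_pos rfl]
      rw [Finset.prod_eq_one, mul_one]
      · ring
      · intro k hk
        simp only [Finset.mem_erase] at hk
        rw [if_neg hk.1, if_neg hk.2.1, measure_univ]
    rw [hprod]
  have hre : {ω : Fin n → β | (ω i, ω j) ∈ C} = (fun ω : Fin n → β => (ω i, ω j)) ⁻¹' C := rfl
  rw [hre, ← Measure.map_apply hT hC, hmap, hνC]


/-- **Non-perfect anchors on decision trees of arbitrary depth are not informative.**
The anchor rule is an axis-aligned box `XR = ∏_j I_j` (each `I_j` an interval) containing
`x₀`, with precision `p`, `0 < p < 1`, for `f` at `x₀`. -/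
theorem anchors_nonperfect_noninformative_on_unbounded_trees
    {d : ℕ} (hd : 0 < d)
    (μ : Measure (Fin d → ℝ)) [IsProbabilityMeasure μ]
    (ρ : (Fin d → ℝ) → ℝ≥0∞) (hdens : μ = volume.withDensity ρ)
    (F : Set ((Fin d → ℝ) → ℝ))
    (hF : F = {g | (∃ K, IsTree K g) ∧ ∀ x, g x ∈ Set.Icc (-1 : ℝ) 1})
    (f : (Fin d → ℝ) → ℝ) (hf : f ∈ F) (x₀ : Fin d → ℝ)
    (I : Fin d → Set ℝ) (hI : ∀ j, (I j).OrdConnected)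
    (XR : Set (Fin d → ℝ)) (hXR : XR = {x | ∀ j, x j ∈ I j})
    (hx₀ : x₀ ∈ XR) (hcov : 0 < μ XR)
    (p : ℝ) (hp₀ : 0 < p) (hp₁ : p < 1) (hprec : precision μ XR f x₀ = p)
    (n : ℕ) :
    rademacher μ n {g ∈ F | g x₀ = f x₀ ∧ precision μ XR g x₀ = p} =
      rademacher μ n {g ∈ F | g x₀ = f x₀} := by
  haveI : NeZero d := ⟨hd.ne'⟩
  have hXRm : MeasurableSet XR := by
    rw [hXR]
    have hpi : {x : Fin d → ℝ | ∀ j, x j ∈ I j} = Set.pi Set.univ I := by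
      ext x; simp [Set.mem_pi]
    rw [hpi]
    exact MeasurableSet.univ_pi fun j => (hI j).measurableSet
  have hXRtop : μ XR ≠ ⊤ := measure_ne_top _ _
  have hXRpos : 0 < (μ XR).toReal := ENNReal.toReal_pos hcov.ne' hXRtop
  have hnull : ∀ t : ℝ, μ {x | x 0 = t} = 0 := by
    intro t
    rw [hdens]
    apply (withDensity_absolutelyContinuous volume ρ)
    have hsub : {x : Fin d → ℝ | x 0 = t}
        ⊆ Set.pi Set.univ (fun i => if i = 0 then {t} else Set.univ) := by
      intro x hx i _
      dsimp only
      split_ifs with h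
      · subst h; exact hx
      · trivial
    refine measure_mono_null hsub ?_
    rw [volume_pi_pi]
    apply Finset.prod_eq_zero (Finset.mem_univ (0 : Fin d))
    simp
  obtain ⟨hftree, hfb⟩ : (∃ K, IsTree K f) ∧ ∀ x, f x ∈ Set.Icc (-1:ℝ) 1 := by
    rw [hF] at hf; exact hf
  set s := Real.sign (f x₀) with hsdef
  have hs3 : s = -1 ∨ s = 0 ∨ s = 1 := by
    rcases lt_trichotomy (f x₀) 0 with h | h | h
    · left; rw [hsdef, Real.sign_of_neg h]
    · right; left; rw [hsdef, h, Real.sign_zero]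
    · right; right; rw [hsdef, Real.sign_of_pos h]
  set mσ : Measure ℝ :=
    (2 : ℝ≥0∞)⁻¹ • Measure.dirac (-1 : ℝ) + (2 : ℝ≥0∞)⁻¹ • Measure.dirac (1 : ℝ) with hmσ
  haveI hmσprob : IsProbabilityMeasure mσ := ⟨by
    simp [hmσ, Measure.add_apply, Measure.smul_apply, smul_eq_mul,
      ENNReal.inv_two_add_inv_two]⟩
  set ν : Measure ((Fin d → ℝ) × ℝ) := μ.prod mσ with hν
  haveI hνprob : IsProbabilityMeasure ν := by rw [hν]; infer_instance
  have hsample : sampleMeasure μ n = Measure.pi (fun _ : Fin n => ν) := rfl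
  have hms : MeasurableSet ({-1,1} : Set ℝ) :=
    Set.Finite.measurableSet ((Set.finite_singleton (1:ℝ)).insert (-1))
  have hae1 : ∀ᵐ ω ∂sampleMeasure μ n, ∀ i : Fin n, (ω i).2 = -1 ∨ (ω i).2 = 1 := by
    rw [hsample, ae_all_iff]
    intro i
    rw [ae_iff]
    have hset : {ω : Fin n → (Fin d → ℝ) × ℝ | ¬((ω i).2 = -1 ∨ (ω i).2 = 1)}
        = Function.eval i ⁻¹' {a : (Fin d → ℝ) × ℝ | ¬(a.2 = -1 ∨ a.2 = 1)} := rfl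
    rw [hset]
    apply Measure.pi_eval_preimage_null
    have hseteq : {a : (Fin d → ℝ) × ℝ | ¬(a.2 = -1 ∨ a.2 = 1)}
        = Set.univ ×ˢ ({-1,1} : Set ℝ)ᶜ := by
      ext a
      simp [Set.mem_prod, Set.mem_compl_iff]
    rw [hseteq, hν, Measure.prod_prod, measure_univ, one_mul, hmσ]
    simp only [Measure.add_apply, Measure.smul_apply, smul_eq_mul,
      Measure.dirac_apply' _ hms.compl]
    rw [Set.indicator_of_notMem (by simp), Set.indicator_of_notMem (by simp)]
    simp
  have hae2 : ∀ᵐ ω ∂sampleMeasure μ n, ∀ i : Fin n, (ω i).1 0 ≠ x₀ 0 := by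
    rw [hsample, ae_all_iff]
    intro i
    rw [ae_iff]
    have hset : {ω : Fin n → (Fin d → ℝ) × ℝ | ¬(ω i).1 0 ≠ x₀ 0}
        = Function.eval i ⁻¹' {a : (Fin d → ℝ) × ℝ | a.1 0 = x₀ 0} := by
      ext ω; simp [Function.eval]
    rw [hset]
    apply Measure.pi_eval_preimage_null
    have hseteq : {a : (Fin d → ℝ) × ℝ | a.1 0 = x₀ 0}
        = {x : Fin d → ℝ | x 0 = x₀ 0} ×ˢ (Set.univ : Set ℝ) := by
      ext a; simp [Set.mem_prod]
    rw [hseteq, hν, Measure.prod_prod, hnull, zero_mul]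
  have hae3 : ∀ᵐ ω ∂sampleMeasure μ n, ∀ i j : Fin n, i ≠ j → (ω i).1 0 ≠ (ω j).1 0 := by
    rw [hsample, ae_all_iff]
    intro i
    rw [ae_all_iff]
    intro j
    rcases eq_or_ne i j with rfl | hij
    · exact Eventually.of_forall fun ω h => absurd rfl h
    · rw [ae_iff]
      have hCm : MeasurableSet {ab : ((Fin d → ℝ) × ℝ) × ((Fin d → ℝ) × ℝ) |
          ab.1.1 0 = ab.2.1 0} := by
        apply measurableSet_eq_fun
        · exact (measurable_pi_apply 0).comp (measurable_fst.comp measurable_fst)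
        · exact (measurable_pi_apply 0).comp (measurable_fst.comp measurable_snd)
      have hset : {ω : Fin n → (Fin d → ℝ) × ℝ | ¬(i ≠ j → (ω i).1 0 ≠ (ω j).1 0)}
          = {ω : Fin n → (Fin d → ℝ) × ℝ | (ω i, ω j) ∈
              {ab : ((Fin d → ℝ) × ℝ) × ((Fin d → ℝ) × ℝ) | ab.1.1 0 = ab.2.1 0}} := by
        ext ω
        simp [hij]
      rw [hset]
      apply pi_pair_null ν hCm _ hij
      rw [Measure.prod_apply hCm]
      have hz : ∀ a : (Fin d → ℝ) × ℝ,
          ν {b : (Fin d → ℝ) × ℝ | a.1 0 = b.1 0} = 0 := by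
        intro a
        have heq2 : {b : (Fin d → ℝ) × ℝ | a.1 0 = b.1 0}
            = {x : Fin d → ℝ | x 0 = a.1 0} ×ˢ (Set.univ : Set ℝ) := by
          ext b
          simp [Set.mem_prod, eq_comm]
        rw [heq2, hν, Measure.prod_prod, hnull, zero_mul]
      simp [hz]
  unfold rademacher
  apply integral_congr_ae
  filter_upwards [hae1, hae2, hae3] with ω h1 h2 h3
  -- construct the witness tree
  set τ : Fin (n+1) → ℝ := Fin.cases (x₀ 0) (fun i => (ω i).1 0) with hτdef
  set v : Fin (n+1) → ℝ := Fin.cases (f x₀) (fun i => (ω i).2) with hvdef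
  have hτ0 : τ 0 = x₀ 0 := rfl
  have hτs : ∀ i : Fin n, τ i.succ = (ω i).1 0 := fun i => by
    simp [hτdef]
  have hv0 : v 0 = f x₀ := rfl
  have hvs : ∀ i : Fin n, v i.succ = (ω i).2 := fun i => by
    simp [hvdef]
  have hτinj : Function.Injective τ := by
    intro a b hab
    rcases Fin.eq_zero_or_eq_succ a with rfl | ⟨a', rfl⟩ <;>
      rcases Fin.eq_zero_or_eq_succ b with rfl | ⟨b', rfl⟩
    · rfl
    · rw [hτ0, hτs] at hab
      exact absurd hab.symm (h2 b')
    · rw [hτ0, hτs] at hab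
      exact absurd hab (h2 a')
    · rw [hτs, hτs] at hab
      rcases eq_or_ne a' b' with rfl | hne
      · rfl
      · exact absurd hab (h3 a' b' hne)
  have hvIcc : ∀ i, v i ∈ Set.Icc (-1:ℝ) 1 := by
    intro i
    rcases Fin.eq_zero_or_eq_succ i with rfl | ⟨i', rfl⟩
    · rw [hv0]; exact hfb x₀
    · rw [hvs]
      rcases h1 i' with h | h <;> rw [h] <;> norm_num
  obtain ⟨g, hgtree, hgb, hgev, hgmeas⟩ :=
    construction μ hnull XR hXRm hcov p hp₀ hp₁ τ hτinj v hvIcc s hs3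
  have hgx₀ : g x₀ = f x₀ := hgev 0 x₀ hτ0.symm
  have hgxi : ∀ i : Fin n, g ((ω i).1) = (ω i).2 := fun i => by
    rw [hgev i.succ ((ω i).1) (hτs i).symm, hvs]
  have hgF : g ∈ F := by rw [hF]; exact ⟨hgtree, hgb⟩
  have hsigng : Real.sign (g x₀) = s := by rw [hgx₀, hsdef]
  have hgprec : precision μ XR g x₀ = p := by
    unfold precision
    rw [hsigng]
    rw [hgmeas, mul_div_assoc, div_self hXRpos.ne', mul_one]
  -- value of witness
  set B : ℝ := (n:ℝ)⁻¹ * n with hB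
  have hterm : ∀ i : Fin n, (ω i).2 * g ((ω i).1) = 1 := by
    intro i
    rw [hgxi i]
    rcases h1 i with h | h <;> rw [h] <;> norm_num
  have hval : (n:ℝ)⁻¹ * ∑ i : Fin n, (ω i).2 * g ((ω i).1) = B := by
    simp only [hterm]
    rw [Finset.sum_const, Finset.card_univ, Fintype.card_fin, nsmul_eq_mul, mul_one, hB]
  -- upper bound
  have hub : ∀ gg : (Fin d → ℝ) → ℝ, gg ∈ F →
      (n:ℝ)⁻¹ * ∑ i : Fin n, (ω i).2 * gg ((ω i).1) ≤ B := by
    intro gg hgg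
    obtain ⟨-, hggb⟩ : (∃ K, IsTree K gg) ∧ ∀ x, gg x ∈ Set.Icc (-1:ℝ) 1 := by
      rw [hF] at hgg; exact hgg
    rw [hB]
    apply mul_le_mul_of_nonneg_left _ (by positivity)
    calc (∑ i : Fin n, (ω i).2 * gg ((ω i).1)) ≤ ∑ i : Fin n, 1 := by
          apply Finset.sum_le_sum
          intro i _
          obtain ⟨hlo, hhi⟩ := hggb ((ω i).1)
          rcases h1 i with h | h <;> rw [h] <;> linarith
      _ = n := by simp [Finset.card_univ]
  have hGr1 : IsGreatest ((fun g => (n : ℝ)⁻¹ * ∑ i, (ω i).2 * g (ω i).1) ''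
      {g ∈ F | g x₀ = f x₀ ∧ precision μ XR g x₀ = p}) B := by
    constructor
    · exact ⟨g, ⟨hgF, hgx₀, hgprec⟩, hval⟩
    · rintro y ⟨gg, hgg, rfl⟩
      exact hub gg hgg.1
  have hGr2 : IsGreatest ((fun g => (n : ℝ)⁻¹ * ∑ i, (ω i).2 * g (ω i).1) ''
      {g ∈ F | g x₀ = f x₀}) B := by
    constructor
    · exact ⟨g, ⟨hgF, hgx₀⟩, hval⟩
    · rintro y ⟨gg, hgg, rfl⟩
      exact hub gg hgg.1
  rw [hGr1.csSup_eq, hGr2.csSup_eq]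
end
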